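/- arXiv:0909.5674 — 6 statements merged into one kernel-verified Lean document; each statement's English description precedes it below -/
import Mathlib

section
/- Exceptional case t = γ (Theorem 3.4 / Lemma 3.18): Suppose t = γ. (i) If μ = 0 and η = 0, then for every d > 0 the constant function ψ ≡ 1 is a solution of the model Lichnerowicz equation L_d; in particular every d > 0 admits a solution with ψ(0) = 1, so there is a one-parameter family of solutions of the reduced system. (ii) If μ = 0 and η ≠ 0, then for every d > 0, every solution ψ of L_d satisfies ψ(0) > 1; in particular no d > 0 admits a solution with ψ(0) = 1. -/
open Real Filter

/-- The 2π-periodic function equal to −1 on (−π,0) and 1 on (0,π). -/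
noncomputable def lam (x : ℝ) : ℝ := if 0 < Real.sin x then 1 else -1

/-- The critical exponent q = 2n/(n−2). -/
noncomputable def qex (n : ℕ) : ℝ := 2 * n / ((n : ℝ) - 2)

/-- The coupling constant κ = (n−1)/n. -/
noncomputable def kap (n : ℕ) : ℝ := ((n : ℝ) - 1) / n

/-- A solution of the model Lichnerowicz equation `L_d` with parameters t, γ, η, μ:
a 2π-periodic, positive, C¹ function, twice differentiable off the multiples of π,
satisfying the equation there. -/
def IsModelSolution (n : ℕ) (t γ η μ d : ℝ) (ψ : ℝ → ℝ) : Prop :=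
  (∀ x, ψ (x + 2 * Real.pi) = ψ x) ∧
  (∀ x, 0 < ψ x) ∧
  ContDiff ℝ 1 ψ ∧
  ∀ x : ℝ, (∀ k : ℤ, x ≠ (k : ℝ) * Real.pi) →
    DifferentiableAt ℝ (deriv ψ) x ∧
    -2 * kap n * qex n * d ^ (-(qex n - 2)) * deriv (deriv ψ) x
      - 2 * η ^ 2 * d ^ (-(2 * qex n)) * ψ x ^ (-qex n - 1)
      - kap n * (μ * d ^ (-qex n) + γ + lam x) ^ 2 * ψ x ^ (-qex n - 1)
      + kap n * (t + lam x) ^ 2 * ψ x ^ (qex n - 1) = 0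

set_option maxHeartbeats 1600000 in
/-- Exceptional case t = γ (Theorem 3.4 / Lemma 3.18). -/
theorem exceptional_case (n : ℕ) (hn : 3 ≤ n) (t γ η μ : ℝ)
    (hγ : -1 < γ ∧ γ < 1) (ht : t = γ) (hμ : μ = 0) :
    (η = 0 → ∀ d : ℝ, 0 < d → IsModelSolution n t γ η μ d (fun _ => 1)) ∧
    (η ≠ 0 → ∀ d : ℝ, 0 < d → ∀ ψ : ℝ → ℝ, IsModelSolution n t γ η μ d ψ → 1 < ψ 0) := by
  subst ht hμ
  obtain ⟨hγ1, hγ2⟩ := hγ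
  have hn3 : (3:ℝ) ≤ (n:ℝ) := by exact_mod_cast hn
  have hq : 0 < qex n := by
    unfold qex; apply div_pos (by linarith) (by linarith)
  have hκ : 0 < kap n := by
    unfold kap; apply div_pos (by linarith) (by linarith)
  have hlam : ∀ x, lam x = 1 ∨ lam x = -1 := by
    intro x; unfold lam; split <;> simp
  have hlamsq : ∀ x, (t + lam x)^2 ≤ 4 := by
    intro x; rcases hlam x with h | h <;> rw [h] <;> nlinarith
  constructor
  · rintro rfl d hd
    refine ⟨fun x => rfl, fun x => one_pos, contDiff_const, fun x hx => ?_⟩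
    have h0 : (deriv fun _ : ℝ => (1:ℝ)) = fun _ => (0:ℝ) := funext fun y => deriv_const y 1
    rw [h0]
    refine ⟨differentiableAt_const 0, ?_⟩
    have h1 : deriv (fun _ : ℝ => (0:ℝ)) x = 0 := deriv_const x 0
    rw [h1]
    simp [Real.one_rpow]
  · intro hη d hd ψ hψ
    obtain ⟨hper, hpos, hC1, heq⟩ := hψ
    by_contra hcon
    push_neg at hcon
    have hcont : Continuous ψ := hC1.continuous
    have hcontd : Continuous (deriv ψ) := hC1.continuous_deriv le_rfl
    -- global minimum
    obtain ⟨a, ha, hmin⟩ := isCompact_Icc.exists_isMinOn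
      (Set.nonempty_Icc.2 (by positivity : (0:ℝ) ≤ 2 * π)) (hcont.continuousOn (s := Set.Icc 0 (2*π)))
    have hper' : Function.Periodic ψ (2*π) := hper
    have hglob : ∀ x, ψ a ≤ ψ x := by
      intro x
      obtain ⟨y, hy, hxy⟩ := hper'.exists_mem_Ico₀ (by positivity) x
      rw [hxy]
      exact hmin (Set.Ico_subset_Icc_self hy)
    have hψa : ψ a ≤ 1 := le_trans (hglob 0) hcon
    have hda : deriv ψ a = 0 := by
      have hloc : IsLocalMin ψ a := Filter.Eventually.of_forall hglob
      exact hloc.deriv_eq_zero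
    -- constants
    have hη2 : 0 < η ^ 2 := by
      rcases lt_or_gt_of_ne hη with h | h <;> nlinarith
    obtain ⟨A, hAdef⟩ : ∃ A : ℝ, A = 2 * η ^ 2 * d ^ (-(2 * qex n)) := ⟨_, rfl⟩
    have hA0 : 0 < A := by
      rw [hAdef]
      exact mul_pos (by nlinarith [hη2]) (Real.rpow_pos_of_pos hd _)
    -- eventual negativity of the comparison function near 1
    have hFc : ContinuousAt (fun u : ℝ =>
        -A * u ^ (-qex n - 1) + 4 * kap n * (u ^ (qex n - 1) - u ^ (-qex n - 1))) 1 := by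
      have c1 : ContinuousAt (fun u : ℝ => u ^ (-qex n - 1)) 1 :=
        Real.continuousAt_rpow_const 1 _ (Or.inl one_ne_zero)
      have c2 : ContinuousAt (fun u : ℝ => u ^ (qex n - 1)) 1 :=
        Real.continuousAt_rpow_const 1 _ (Or.inl one_ne_zero)
      exact (continuousAt_const.mul c1).add (continuousAt_const.mul (c2.sub c1))
    have hF1 : (-A * (1:ℝ) ^ (-qex n - 1) + 4 * kap n * ((1:ℝ) ^ (qex n - 1) - (1:ℝ) ^ (-qex n - 1))) < 0 := by
      rw [Real.one_rpow, Real.one_rpow]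
      have : -A * 1 + 4 * kap n * (1 - 1) = -A := by ring
      rw [this]; linarith
    have hFev : ∀ᶠ u in nhds (1:ℝ),
        -A * u ^ (-qex n - 1) + 4 * kap n * (u ^ (qex n - 1) - u ^ (-qex n - 1)) < 0 :=
      hFc.eventually_lt_const hF1
    obtain ⟨ε, hε, hεf⟩ := Metric.eventually_nhds_iff.1 hFev
    -- pointwise concavity where ψ ≤ 1 + ε
    have hpp : ∀ x : ℝ, (∀ k : ℤ, x ≠ (k:ℝ) * π) → ψ x < 1 + ε → deriv (deriv ψ) x < 0 := by
      intro x hx hlt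
      obtain ⟨hdiff, he⟩ := heq x hx
      have hu : 0 < ψ x := hpos x
      have hP : 0 < ψ x ^ (-qex n - 1) := Real.rpow_pos_of_pos hu _
      have hQ : 0 < ψ x ^ (qex n - 1) := Real.rpow_pos_of_pos hu _
      have hc2 : 0 ≤ kap n * (t + lam x)^2 := by positivity
      have hc2K : kap n * (t + lam x)^2 ≤ 4 * kap n := by nlinarith [hlamsq x]
      have hC : 0 < 2 * kap n * qex n * d ^ (-(qex n - 2)) := by
        have := Real.rpow_pos_of_pos hd (-(qex n - 2)); positivity
      have heq2 : 2 * kap n * qex n * d ^ (-(qex n - 2)) * deriv (deriv ψ) x =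
          -A * ψ x ^ (-qex n - 1)
            + kap n * (t + lam x)^2 * (ψ x ^ (qex n - 1) - ψ x ^ (-qex n - 1)) := by
        rw [hAdef]
        linear_combination -he
      have hb : -A * ψ x ^ (-qex n - 1)
            + kap n * (t + lam x)^2 * (ψ x ^ (qex n - 1) - ψ x ^ (-qex n - 1)) < 0 := by
        rcases le_or_gt (ψ x) 1 with h1 | h1
        · have hQP : ψ x ^ (qex n - 1) ≤ ψ x ^ (-qex n - 1) :=
            Real.rpow_le_rpow_of_exponent_ge hu h1 (by linarith)
          nlinarith
        · have hPQ : ψ x ^ (-qex n - 1) ≤ ψ x ^ (qex n - 1) :=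
            Real.rpow_le_rpow_of_exponent_le (le_of_lt h1) (by linarith)
          have hdist : dist (ψ x) 1 < ε := by
            rw [Real.dist_eq, abs_lt]; constructor <;> linarith
          have := hεf hdist
          nlinarith
      by_contra hge
      push_neg at hge
      have hprod := mul_nonneg (le_of_lt hC) hge
      linarith [heq2, hb]
    -- the interval to the right of a avoiding multiples of π
    set b : ℝ := ((⌊a / π⌋ : ℝ) + 1) * π with hbdef
    have hπ : 0 < π := Real.pi_pos
    have hab : a < b := by
      have h := Int.lt_floor_add_one (a / π)
      calc a = a / π * π := by field_simp
        _ < ((⌊a / π⌋ : ℝ) + 1) * π := by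
            apply mul_lt_mul_of_pos_right h hπ
    have hbnot : ∀ x, a < x → x < b → ∀ k : ℤ, x ≠ (k:ℝ) * π := by
      intro x hx1 hx2 k hk
      rcases le_or_gt (k:ℝ) (⌊a / π⌋ : ℝ) with h | h
      · have : (k:ℝ) * π ≤ (⌊a / π⌋ : ℝ) * π := mul_le_mul_of_nonneg_right h (le_of_lt hπ)
        have h2 : (⌊a / π⌋ : ℝ) ≤ a / π := Int.floor_le _
        have h3 : (⌊a / π⌋ : ℝ) * π ≤ a := by
          calc (⌊a / π⌋ : ℝ) * π ≤ a / π * π := mul_le_mul_of_nonneg_right h2 (le_of_lt hπ)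
            _ = a := by field_simp
        rw [hk] at hx1; linarith
      · have hk2 : (⌊a / π⌋ : ℤ) < k := by exact_mod_cast h
        have hk3 : ((⌊a / π⌋ : ℝ) + 1) ≤ (k:ℝ) := by exact_mod_cast Int.add_one_le_of_lt hk2
        have : b ≤ (k:ℝ) * π := mul_le_mul_of_nonneg_right hk3 (le_of_lt hπ)
        rw [hk] at hx2; linarith
    -- continuity: ψ < 1 + ε near a
    obtain ⟨δ, hδ, hδf⟩ := Metric.continuousAt_iff.1 (hcont.continuousAt (x := a)) ε hε
    set c : ℝ := min (a + δ/2) ((a + b)/2) with hcdef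
    have hac : a < c := lt_min (by linarith) (by linarith)
    have hcb : c < b := lt_of_le_of_lt (min_le_right _ _) (by linarith)
    have hcδ : c - a < δ := by
      have := min_le_left (a + δ/2) ((a + b)/2); linarith
    have hsmall : ∀ x ∈ Set.Ioo a c, deriv (deriv ψ) x < 0 := by
      intro x hx
      apply hpp x (hbnot x hx.1 (lt_trans hx.2 hcb))
      have hdx : dist x a < δ := by
        rw [Real.dist_eq, abs_lt]; constructor <;> [linarith [hx.1]; linarith [hx.2]]
      have := hδf hdx
      rw [Real.dist_eq, abs_lt] at this
      linarith [this.1, this.2]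
    have hanti : StrictAntiOn (deriv ψ) (Set.Icc a c) := by
      apply strictAntiOn_of_deriv_neg (convex_Icc a c) hcontd.continuousOn
      rw [interior_Icc]; exact hsmall
    have hdneg : ∀ x ∈ Set.Ioo a c, deriv ψ x < 0 := by
      intro x hx
      have := hanti (Set.left_mem_Icc.2 (le_of_lt hac)) ⟨le_of_lt hx.1, le_of_lt hx.2⟩ hx.1
      rw [hda] at this; exact this
    have hanti2 : StrictAntiOn ψ (Set.Icc a c) := by
      apply strictAntiOn_of_deriv_neg (convex_Icc a c) hcont.continuousOn
      rw [interior_Icc]; exact hdneg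
    have : ψ c < ψ a := hanti2 (Set.left_mem_Icc.2 (le_of_lt hac)) (Set.right_mem_Icc.2 (le_of_lt hac)) hac
    linarith [hglob c]
end

section
/- Constant barrier bounds (Lemma 3.10): Suppose |t| ≠ 1. For d > 0 define M_{d,+} = [(2η² d^{−2q} + κ(μ d^{−q} + γ + 1)²)/(κ(t + 1)²)]^{1/(2q)} and M_{d,−} = [(2η² d^{−2q} + κ(μ d^{−q} + γ − 1)²)/(κ(t − 1)²)]^{1/(2q)}, and set m_d = min(M_{d,+}, M_{d,−}) and M_d = max(M_{d,+}, M_{d,−}). Then every solution ψ of the model Lichnerowicz equation L_d satisfies m_d ≤ ψ(x) ≤ M_d for all x ∈ ℝ. -/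
open Real Filter

private lemma rpow_key_lt {qv B C u : ℝ} (hq : 0 < qv) (hB : 0 ≤ B) (hC : 0 < C) (hu : 0 < u)
    (h : (B / C) ^ (1 / (2 * qv)) < u) :
    B * u ^ (-qv - 1) < C * u ^ (qv - 1) := by
  have h2q : (0:ℝ) < 2 * qv := by linarith
  have hBC : (0:ℝ) ≤ B / C := div_nonneg hB hC.le
  have h1 : B / C < u ^ (2 * qv) := by
    have h2 := Real.rpow_lt_rpow (Real.rpow_nonneg hBC _) h h2q
    rwa [← Real.rpow_mul hBC, one_div, inv_mul_cancel₀ h2q.ne', Real.rpow_one] at h2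
  have hP : (0:ℝ) < u ^ (-qv - 1) := Real.rpow_pos_of_pos hu _
  have key : u ^ (qv - 1) = u ^ (2 * qv) * u ^ (-qv - 1) := by
    rw [← Real.rpow_add hu]; ring_nf
  have hB' : B < C * u ^ (2 * qv) := by
    rw [div_lt_iff₀ hC] at h1; linarith
  calc B * u ^ (-qv - 1) < (C * u ^ (2 * qv)) * u ^ (-qv - 1) :=
        mul_lt_mul_of_pos_right hB' hP
    _ = C * (u ^ (2 * qv) * u ^ (-qv - 1)) := by ring
    _ = C * u ^ (qv - 1) := by rw [← key]

private lemma rpow_key_gt {qv B C u : ℝ} (hq : 0 < qv) (hB : 0 ≤ B) (hC : 0 < C) (hu : 0 < u)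
    (h : u < (B / C) ^ (1 / (2 * qv))) :
    C * u ^ (qv - 1) < B * u ^ (-qv - 1) := by
  have h2q : (0:ℝ) < 2 * qv := by linarith
  have hBC : (0:ℝ) ≤ B / C := div_nonneg hB hC.le
  have h1 : u ^ (2 * qv) < B / C := by
    have h2 := Real.rpow_lt_rpow hu.le h h2q
    rwa [← Real.rpow_mul hBC, one_div, inv_mul_cancel₀ h2q.ne', Real.rpow_one] at h2
  have hP : (0:ℝ) < u ^ (-qv - 1) := Real.rpow_pos_of_pos hu _
  have key : u ^ (qv - 1) = u ^ (2 * qv) * u ^ (-qv - 1) := by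
    rw [← Real.rpow_add hu]; ring_nf
  have hB' : C * u ^ (2 * qv) < B := by
    rw [lt_div_iff₀ hC] at h1; linarith
  calc C * u ^ (qv - 1) = (C * u ^ (2 * qv)) * u ^ (-qv - 1) := by rw [key]; ring
    _ < B * u ^ (-qv - 1) := mul_lt_mul_of_pos_right hB' hP

private lemma incr_of_pos (f : ℝ → ℝ) (hfc : Continuous f) (hdc : Continuous (deriv f))
    (x₀ δ : ℝ) (hδ : 0 < δ) (h0 : deriv f x₀ = 0)
    (hpp : ∀ x ∈ Set.Ioo x₀ (x₀ + δ), 0 < deriv (deriv f) x) :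
    f x₀ < f (x₀ + δ) := by
  have h1 : StrictMonoOn (deriv f) (Set.Icc x₀ (x₀ + δ)) :=
    strictMonoOn_of_deriv_pos (convex_Icc _ _) hdc.continuousOn (by rwa [interior_Icc])
  have h2 : ∀ x ∈ Set.Ioo x₀ (x₀ + δ), 0 < deriv f x := fun x hx => by
    have := h1 ⟨le_refl x₀, by linarith [hx.2]⟩ ⟨hx.1.le, hx.2.le⟩ hx.1
    rwa [h0] at this
  have h3 : StrictMonoOn f (Set.Icc x₀ (x₀ + δ)) :=
    strictMonoOn_of_deriv_pos (convex_Icc _ _) hfc.continuousOn (by rw [interior_Icc]; exact h2)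
  exact h3 ⟨le_refl _, by linarith⟩ ⟨by linarith, le_refl _⟩ (by linarith)

private lemma decr_of_neg (f : ℝ → ℝ) (hfc : Continuous f) (hdc : Continuous (deriv f))
    (x₀ δ : ℝ) (hδ : 0 < δ) (h0 : deriv f x₀ = 0)
    (hpp : ∀ x ∈ Set.Ioo x₀ (x₀ + δ), deriv (deriv f) x < 0) :
    f (x₀ + δ) < f x₀ := by
  have h1 : StrictAntiOn (deriv f) (Set.Icc x₀ (x₀ + δ)) :=
    strictAntiOn_of_deriv_neg (convex_Icc _ _) hdc.continuousOn (by rwa [interior_Icc])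
  have h2 : ∀ x ∈ Set.Ioo x₀ (x₀ + δ), deriv f x < 0 := fun x hx => by
    have := h1 ⟨le_refl x₀, by linarith [hx.2]⟩ ⟨hx.1.le, hx.2.le⟩ hx.1
    rwa [h0] at this
  have h3 : StrictAntiOn f (Set.Icc x₀ (x₀ + δ)) :=
    strictAntiOn_of_deriv_neg (convex_Icc _ _) hfc.continuousOn (by rw [interior_Icc]; exact h2)
  exact h3 ⟨le_refl _, by linarith⟩ ⟨by linarith, le_refl _⟩ (by linarith)

private lemma exists_pifree (x₀ : ℝ) :
    ∃ δ₁ > 0, ∀ x ∈ Set.Ioo x₀ (x₀ + δ₁), ∀ k : ℤ, x ≠ (k : ℝ) * Real.pi := by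
  have hπ := Real.pi_pos
  refine ⟨((⌊x₀ / Real.pi⌋ : ℝ) + 1) * Real.pi - x₀, ?_, ?_⟩
  · have h := Int.lt_floor_add_one (x₀ / Real.pi)
    have h2 : x₀ < ((⌊x₀ / Real.pi⌋ : ℝ) + 1) * Real.pi := by
      rw [← div_lt_iff₀ hπ] at *; linarith
    linarith
  · rintro x hx k rfl
    have h1 : (⌊x₀ / Real.pi⌋ : ℝ) * Real.pi ≤ x₀ := by
      have := Int.floor_le (x₀ / Real.pi)
      rw [← le_div_iff₀ hπ]; linarith
    have hlt : (⌊x₀ / Real.pi⌋ : ℝ) * Real.pi < (k : ℝ) * Real.pi := lt_of_le_of_lt h1 hx.1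
    have hk1 : (⌊x₀ / Real.pi⌋ : ℝ) < (k : ℝ) := lt_of_mul_lt_mul_right hlt hπ.le
    have hk2 : ⌊x₀ / Real.pi⌋ + 1 ≤ k := by exact_mod_cast hk1
    have hk3 : ((⌊x₀ / Real.pi⌋ : ℝ) + 1) * Real.pi ≤ (k : ℝ) * Real.pi := by
      have : ((⌊x₀ / Real.pi⌋ : ℝ) + 1) ≤ (k : ℝ) := by exact_mod_cast hk2
      exact mul_le_mul_of_nonneg_right this hπ.le
    have := hx.2
    linarith


/-- Constant barrier bounds (Lemma 3.10). -/
theorem constant_barriers (n : ℕ) (hn : 3 ≤ n) (t γ η μ : ℝ)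
    (hγ : -1 < γ ∧ γ < 1) (ht : |t| ≠ 1) (d : ℝ) (hd : 0 < d)
    (ψ : ℝ → ℝ) (hψ : IsModelSolution n t γ η μ d ψ) :
    ∀ x : ℝ,
      min (((2 * η ^ 2 * d ^ (-(2 * qex n)) + kap n * (μ * d ^ (-qex n) + γ + 1) ^ 2) /
              (kap n * (t + 1) ^ 2)) ^ (1 / (2 * qex n)))
          (((2 * η ^ 2 * d ^ (-(2 * qex n)) + kap n * (μ * d ^ (-qex n) + γ - 1) ^ 2) /
              (kap n * (t - 1) ^ 2)) ^ (1 / (2 * qex n))) ≤ ψ x ∧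
      ψ x ≤
        max (((2 * η ^ 2 * d ^ (-(2 * qex n)) + kap n * (μ * d ^ (-qex n) + γ + 1) ^ 2) /
                (kap n * (t + 1) ^ 2)) ^ (1 / (2 * qex n)))
            (((2 * η ^ 2 * d ^ (-(2 * qex n)) + kap n * (μ * d ^ (-qex n) + γ - 1) ^ 2) /
                (kap n * (t - 1) ^ 2)) ^ (1 / (2 * qex n))) := by
  obtain ⟨hper, hpos, hC1, heq⟩ := hψ
  have hn3 : (3:ℝ) ≤ (n:ℝ) := by exact_mod_cast hn
  have hπ := Real.pi_pos
  have hq : 0 < qex n := div_pos (by linarith) (by linarith)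
  have hκ : 0 < kap n := div_pos (by linarith) (by linarith)
  have ht1 : t + 1 ≠ 0 := by
    intro h; apply ht
    have h' : t = -1 := by linarith
    rw [h']; simp
  have ht2 : t - 1 ≠ 0 := by
    intro h; apply ht
    have h' : t = 1 := by linarith
    rw [h']; simp
  have hCp : 0 < kap n * (t + 1) ^ 2 :=
    mul_pos hκ (lt_of_le_of_ne (sq_nonneg _) (Ne.symm (pow_ne_zero 2 ht1)))
  have hCm : 0 < kap n * (t - 1) ^ 2 :=
    mul_pos hκ (lt_of_le_of_ne (sq_nonneg _) (Ne.symm (pow_ne_zero 2 ht2)))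
  have hEp : 0 ≤ 2 * η ^ 2 * d ^ (-(2 * qex n)) + kap n * (μ * d ^ (-qex n) + γ + 1) ^ 2 :=
    add_nonneg (mul_nonneg (by positivity) (Real.rpow_nonneg hd.le _))
      (mul_nonneg hκ.le (sq_nonneg _))
  have hEm : 0 ≤ 2 * η ^ 2 * d ^ (-(2 * qex n)) + kap n * (μ * d ^ (-qex n) + γ - 1) ^ 2 :=
    add_nonneg (mul_nonneg (by positivity) (Real.rpow_nonneg hd.le _))
      (mul_nonneg hκ.le (sq_nonneg _))
  set Mp := ((2 * η ^ 2 * d ^ (-(2 * qex n)) + kap n * (μ * d ^ (-qex n) + γ + 1) ^ 2) /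
      (kap n * (t + 1) ^ 2)) ^ (1 / (2 * qex n)) with hMpdef
  set Mm := ((2 * η ^ 2 * d ^ (-(2 * qex n)) + kap n * (μ * d ^ (-qex n) + γ - 1) ^ 2) /
      (kap n * (t - 1) ^ 2)) ^ (1 / (2 * qex n)) with hMmdef
  have hper' : Function.Periodic ψ (2 * Real.pi) := hper
  have hcont : Continuous ψ := hC1.continuous
  have hdcont : Continuous (deriv ψ) := hC1.continuous_deriv le_rfl
  have hApos : 0 < 2 * kap n * qex n * d ^ (-(qex n - 2)) :=
    mul_pos (mul_pos (mul_pos two_pos hκ) hq) (Real.rpow_pos_of_pos hd _)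
  -- sign of second derivative
  have hdd_pos : ∀ x : ℝ, (∀ k : ℤ, x ≠ (k : ℝ) * Real.pi) → max Mp Mm < ψ x →
      0 < deriv (deriv ψ) x := by
    intro x hxπ hbig
    obtain ⟨-, heqx⟩ := heq x hxπ
    have hlam : lam x = 1 ∨ lam x = -1 := by unfold lam; split <;> simp
    have hAw : 0 < 2 * kap n * qex n * d ^ (-(qex n - 2)) * deriv (deriv ψ) x := by
      rcases hlam with h1 | h1 <;> rw [h1] at heqx
      · have hkey := rpow_key_lt hq hEp hCp (hpos x)
          (lt_of_le_of_lt (le_max_left Mp Mm) hbig)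
        rw [add_mul] at hkey
        linarith
      · rw [show (μ * d ^ (-qex n) + γ + (-1:ℝ)) = μ * d ^ (-qex n) + γ - 1 by ring,
          show (t + (-1:ℝ)) = t - 1 by ring] at heqx
        have hkey := rpow_key_lt hq hEm hCm (hpos x)
          (lt_of_le_of_lt (le_max_right Mp Mm) hbig)
        rw [add_mul] at hkey
        linarith
    by_contra hcon
    push_neg at hcon
    nlinarith [mul_nonneg hApos.le (neg_nonneg.mpr hcon)]
  have hdd_neg : ∀ x : ℝ, (∀ k : ℤ, x ≠ (k : ℝ) * Real.pi) → ψ x < min Mp Mm →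
      deriv (deriv ψ) x < 0 := by
    intro x hxπ hsml
    obtain ⟨-, heqx⟩ := heq x hxπ
    have hlam : lam x = 1 ∨ lam x = -1 := by unfold lam; split <;> simp
    have hAw : 2 * kap n * qex n * d ^ (-(qex n - 2)) * deriv (deriv ψ) x < 0 := by
      rcases hlam with h1 | h1 <;> rw [h1] at heqx
      · have hkey := rpow_key_gt hq hEp hCp (hpos x)
          (lt_of_lt_of_le hsml (min_le_left Mp Mm))
        rw [add_mul] at hkey
        linarith
      · rw [show (μ * d ^ (-qex n) + γ + (-1:ℝ)) = μ * d ^ (-qex n) + γ - 1 by ring,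
          show (t + (-1:ℝ)) = t - 1 by ring] at heqx
        have hkey := rpow_key_gt hq hEm hCm (hpos x)
          (lt_of_lt_of_le hsml (min_le_right Mp Mm))
        rw [add_mul] at hkey
        linarith
    by_contra hcon
    push_neg at hcon
    nlinarith [mul_nonneg hApos.le hcon]
  -- global max and min
  obtain ⟨a, ha, hamax⟩ := isCompact_Icc.exists_isMaxOn
    (Set.nonempty_Icc.mpr (by positivity : (0:ℝ) ≤ 2 * Real.pi)) hcont.continuousOn
  obtain ⟨b, hb, hbmin⟩ := isCompact_Icc.exists_isMinOn
    (Set.nonempty_Icc.mpr (by positivity : (0:ℝ) ≤ 2 * Real.pi)) hcont.continuousOn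
  have hga : ∀ x, ψ x ≤ ψ a := by
    intro x
    obtain ⟨y, hy, hxy⟩ := hper'.exists_mem_Ico₀ (by positivity) x
    rw [hxy]; exact hamax ⟨hy.1, hy.2.le⟩
  have hgb : ∀ x, ψ b ≤ ψ x := by
    intro x
    obtain ⟨y, hy, hxy⟩ := hper'.exists_mem_Ico₀ (by positivity) x
    rw [hxy]; exact hbmin ⟨hy.1, hy.2.le⟩
  have hda : deriv ψ a = 0 := by
    have hla : IsLocalMax ψ a :=
      IsMaxOn.isLocalMax (isMaxOn_iff.mpr fun x _ => hga x) Filter.univ_mem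
    exact hla.deriv_eq_zero
  have hdb : deriv ψ b = 0 := by
    have hlb : IsLocalMin ψ b :=
      IsMinOn.isLocalMin (isMinOn_iff.mpr fun x _ => hgb x) Filter.univ_mem
    exact hlb.deriv_eq_zero
  -- upper bound
  have hub : ψ a ≤ max Mp Mm := by
    by_contra hcon
    push_neg at hcon
    obtain ⟨δ₁, hδ₁, hfree⟩ := exists_pifree a
    have hopen : IsOpen {y : ℝ | max Mp Mm < ψ y} := isOpen_lt continuous_const hcont
    obtain ⟨ε, hε, hball⟩ := Metric.isOpen_iff.mp hopen a hcon
    set δ := min δ₁ ε / 2 with hδdef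
    have hδ : 0 < δ := by
      have := lt_min hδ₁ hε
      positivity
    have hδ1 : δ ≤ δ₁ := by
      have := min_le_left δ₁ ε; simp only [hδdef]; linarith
    have hδε : δ < ε := by
      have := min_le_right δ₁ ε; simp only [hδdef]; linarith
    have hcontr : ψ a < ψ (a + δ) := by
      apply incr_of_pos ψ hcont hdcont a δ hδ hda
      intro x hx
      apply hdd_pos x (hfree x ⟨hx.1, by linarith [hx.2]⟩)
      apply hball
      rw [Metric.mem_ball, Real.dist_eq, abs_of_pos (by linarith [hx.1])]
      linarith [hx.2]
    linarith [hga (a + δ)]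
  -- lower bound
  have hlb : min Mp Mm ≤ ψ b := by
    by_contra hcon
    push_neg at hcon
    obtain ⟨δ₁, hδ₁, hfree⟩ := exists_pifree b
    have hopen : IsOpen {y : ℝ | ψ y < min Mp Mm} := isOpen_lt hcont continuous_const
    obtain ⟨ε, hε, hball⟩ := Metric.isOpen_iff.mp hopen b hcon
    set δ := min δ₁ ε / 2 with hδdef
    have hδ : 0 < δ := by
      have := lt_min hδ₁ hε
      positivity
    have hδ1 : δ ≤ δ₁ := by
      have := min_le_left δ₁ ε; simp only [hδdef]; linarith
    have hδε : δ < ε := by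
      have := min_le_right δ₁ ε; simp only [hδdef]; linarith
    have hcontr : ψ (b + δ) < ψ b := by
      apply decr_of_neg ψ hcont hdcont b δ hδ hdb
      intro x hx
      apply hdd_neg x (hfree x ⟨hx.1, by linarith [hx.2]⟩)
      apply hball
      rw [Metric.mem_ball, Real.dist_eq, abs_of_pos (by linarith [hx.1])]
      linarith [hx.2]
    linarith [hgb (b + δ)]
  intro x
  exact ⟨le_trans hlb (hgb x), le_trans (hga x) hub⟩
end

section
/- Small-d limit for vanishing transverse-traceless data (Lemma 3.20): Suppose η = μ = 0 and |t| ≠ 1, and set Ψ = [(1 + γ²)/(1 + t²)]^{1/(2q)}. Then for every ε > 0 there exists δ > 0 such that for every d with 0 < d < δ and every solution ψ of the model Lichnerowicz equation L_d, one has |ψ(x) − Ψ| < ε for all x ∈ ℝ. -/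
open Real Filter Set

lemma lam_cases (x : ℝ) : lam x = 1 ∨ lam x = -1 := by
  unfold lam; split <;> simp

lemma lam_pos {x : ℝ} (h1 : 0 < x) (h2 : x < Real.pi) : lam x = 1 := by
  unfold lam; rw [if_pos (Real.sin_pos_of_pos_of_lt_pi h1 h2)]

lemma lam_neg {x : ℝ} (h1 : Real.pi < x) (h2 : x < 2 * Real.pi) : lam x = -1 := by
  have hs : Real.sin x < 0 := by
    have h := Real.sin_pos_of_pos_of_lt_pi (x := x - Real.pi) (by linarith) (by linarith)
    rw [Real.sin_sub_pi] at h
    linarith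
  unfold lam; rw [if_neg (by linarith)]

lemma ne_int_mul_pi {x : ℝ} {m : ℤ} (h1 : (m : ℝ) * Real.pi < x)
    (h2 : x < ((m : ℝ) + 1) * Real.pi) : ∀ k : ℤ, x ≠ (k : ℝ) * Real.pi := by
  intro k hk
  subst hk
  have hπ := Real.pi_pos
  have hmk : (m : ℝ) < k := by
    have := (mul_lt_mul_iff_left₀ hπ).1 h1; exact_mod_cast this
  have hkm : (k : ℝ) < m + 1 := by
    have := (mul_lt_mul_iff_left₀ hπ).1 h2; exact_mod_cast this
  have h1' : m < k := by exact_mod_cast hmk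
  have h2' : (k : ℝ) < ((m + 1 : ℤ) : ℝ) := by push_cast; linarith
  have h2'' : k < m + 1 := by exact_mod_cast h2'
  omega

/-- Next multiple of π after `x0` stays away: the interval `(x0, x0+r)` with
`r = (⌊x0/π⌋+1)π - x0` contains no integer multiple of π. -/
lemma exists_pifree_interval (x0 : ℝ) : ∃ r > 0,
    ∀ y ∈ Set.Ioo x0 (x0 + r), ∀ k : ℤ, y ≠ (k : ℝ) * Real.pi := by
  have hπ := Real.pi_pos
  set m : ℤ := ⌊x0 / Real.pi⌋ with hm
  have h1 : (m : ℝ) * Real.pi ≤ x0 := (le_div_iff₀ hπ).1 (Int.floor_le _)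
  have h2 : x0 < ((m : ℝ) + 1) * Real.pi := (div_lt_iff₀ hπ).1 (Int.lt_floor_add_one _)
  refine ⟨((m : ℝ) + 1) * Real.pi - x0, by linarith, ?_⟩
  intro y hy
  exact ne_int_mul_pi (by rcases hy with ⟨a, b⟩; linarith) (by rcases hy with ⟨a, b⟩; linarith)

/-- If the second derivative is positive just to the right of a global max, contradiction. -/
lemma not_max_aux (ψ : ℝ → ℝ) (hC : ContDiff ℝ 1 ψ) {x0 r : ℝ} (hr : 0 < r)
    (hmax : ∀ y, ψ y ≤ ψ x0)
    (hpos : ∀ x ∈ Set.Ioo x0 (x0 + r), 0 < deriv (deriv ψ) x) : False := by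
  have hd0 : deriv ψ x0 = 0 :=
    IsLocalMax.deriv_eq_zero (Filter.Eventually.of_forall fun y => hmax y)
  have hmono1 : StrictMonoOn (deriv ψ) (Set.Icc x0 (x0 + r)) := by
    apply strictMonoOn_of_deriv_pos (convex_Icc _ _)
      ((hC.continuous_deriv le_rfl).continuousOn)
    intro x hx
    rw [interior_Icc] at hx
    exact hpos x hx
  have hder_pos : ∀ x ∈ Set.Ioo x0 (x0 + r), 0 < deriv ψ x := by
    intro x hx
    have := hmono1 (Set.left_mem_Icc.2 (by linarith)) ⟨hx.1.le, hx.2.le⟩ hx.1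
    rwa [hd0] at this
  have hmono2 : StrictMonoOn ψ (Set.Icc x0 (x0 + r)) := by
    apply strictMonoOn_of_deriv_pos (convex_Icc _ _) hC.continuous.continuousOn
    intro x hx
    rw [interior_Icc] at hx
    exact hder_pos x hx
  have := hmono2 (Set.left_mem_Icc.2 (by linarith))
    (Set.right_mem_Icc.2 (by linarith)) (by linarith)
  exact absurd (hmax (x0 + r)) (by linarith)

lemma not_min_aux (ψ : ℝ → ℝ) (hC : ContDiff ℝ 1 ψ) {x0 r : ℝ} (hr : 0 < r)
    (hmin : ∀ y, ψ x0 ≤ ψ y)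
    (hneg : ∀ x ∈ Set.Ioo x0 (x0 + r), deriv (deriv ψ) x < 0) : False := by
  have hd0 : deriv ψ x0 = 0 :=
    IsLocalMin.deriv_eq_zero (Filter.Eventually.of_forall fun y => hmin y)
  have hmono1 : StrictAntiOn (deriv ψ) (Set.Icc x0 (x0 + r)) := by
    apply strictAntiOn_of_deriv_neg (convex_Icc _ _)
      ((hC.continuous_deriv le_rfl).continuousOn)
    intro x hx
    rw [interior_Icc] at hx
    exact hneg x hx
  have hder_neg : ∀ x ∈ Set.Ioo x0 (x0 + r), deriv ψ x < 0 := by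
    intro x hx
    have := hmono1 (Set.left_mem_Icc.2 (by linarith)) ⟨hx.1.le, hx.2.le⟩ hx.1
    rwa [hd0] at this
  have hmono2 : StrictAntiOn ψ (Set.Icc x0 (x0 + r)) := by
    apply strictAntiOn_of_deriv_neg (convex_Icc _ _) hC.continuous.continuousOn
    intro x hx
    rw [interior_Icc] at hx
    exact hder_neg x hx
  have := hmono2 (Set.left_mem_Icc.2 (by linarith))
    (Set.right_mem_Icc.2 (by linarith)) (by linarith)
  exact absurd (hmin (x0 + r)) (by linarith)

/-- Mean-value based Lipschitz estimate on a piece. -/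
lemma lip_piece (g : ℝ → ℝ) (hc : Continuous g) {a b K : ℝ} (hK : 0 ≤ K)
    (hd : ∀ x ∈ Set.Ioo a b, DifferentiableAt ℝ g x ∧ |deriv g x| ≤ K) :
    ∀ x y, a ≤ x → x ≤ y → y ≤ b → |g y - g x| ≤ K * (y - x) := by
  intro x y hax hxy hyb
  rcases eq_or_lt_of_le hxy with h | h
  · subst h; simp only [sub_self, abs_zero, mul_zero]; exact le_rfl
  · obtain ⟨c, hc', hc''⟩ := exists_deriv_eq_slope g h hc.continuousOn
      (fun z hz => ((hd z ⟨lt_of_le_of_lt hax hz.1, lt_of_lt_of_le hz.2 hyb⟩).1).differentiableWithinAt)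
    have hcK : |deriv g c| ≤ K := (hd c ⟨lt_of_le_of_lt hax hc'.1, lt_of_lt_of_le hc'.2 hyb⟩).2
    have : g y - g x = deriv g c * (y - x) := by
      rw [eq_div_iff (by intro hz; rw [sub_eq_zero] at hz; exact absurd hz (ne_of_gt h)) ] at hc''
      linarith
    rw [this, abs_mul, abs_of_pos (by linarith : (0:ℝ) < y - x)]
    exact mul_le_mul_of_nonneg_right hcK (by linarith)



lemma rpow_split {q s : ℝ} (hs : 0 < s) : s ^ (q-1) = s ^ (-q-1) * s ^ (2*q) := by
  rw [← Real.rpow_add hs]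
  congr 1
  ring

lemma pow_rpow_self {R q : ℝ} (hR : 0 ≤ R) (hq : q ≠ 0) : (R ^ (1/(2*q))) ^ (2*q) = R := by
  rw [← Real.rpow_mul hR, one_div, inv_mul_cancel₀ (by positivity), Real.rpow_one]

lemma gpos {q a b s : ℝ} (hq : 0 < q) (ha : a ≠ 0) (hs : 0 < s)
    (h : (b^2/a^2) ^ (1/(2*q)) < s) : b^2 * s^(-q-1) < a^2 * s^(q-1) := by
  have ha2 : 0 < a^2 := by positivity
  have hR : (0:ℝ) ≤ b^2/a^2 := by positivity
  have h2q : (0:ℝ) < 2*q := by linarith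
  have key : b^2/a^2 < s ^ (2*q) := by
    have := Real.rpow_lt_rpow (Real.rpow_nonneg hR _) h h2q
    rwa [pow_rpow_self hR (ne_of_gt hq)] at this
  have key2 : b^2 < a^2 * s^(2*q) := by
    rw [div_lt_iff₀ ha2] at key; linarith
  have hsp : (0:ℝ) < s^(-q-1) := Real.rpow_pos_of_pos hs _
  calc b^2 * s^(-q-1) < (a^2 * s^(2*q)) * s^(-q-1) := by
        exact mul_lt_mul_of_pos_right key2 hsp
    _ = a^2 * s^(q-1) := by rw [rpow_split (q := q) hs]; ring

lemma gneg {q a b s : ℝ} (hq : 0 < q) (ha : a ≠ 0) (hs : 0 < s)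
    (h : s < (b^2/a^2) ^ (1/(2*q))) : a^2 * s^(q-1) < b^2 * s^(-q-1) := by
  have ha2 : 0 < a^2 := by positivity
  have hR : (0:ℝ) ≤ b^2/a^2 := by positivity
  have h2q : (0:ℝ) < 2*q := by linarith
  have key : s ^ (2*q) < b^2/a^2 := by
    have := Real.rpow_lt_rpow hs.le h h2q
    rwa [pow_rpow_self hR (ne_of_gt hq)] at this
  have key2 : a^2 * s^(2*q) < b^2 := by
    rw [lt_div_iff₀ ha2] at key; linarith
  have hsp : (0:ℝ) < s^(-q-1) := Real.rpow_pos_of_pos hs _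
  calc a^2 * s^(q-1) = (a^2 * s^(2*q)) * s^(-q-1) := by rw [rpow_split (q := q) hs]; ring
    _ < b^2 * s^(-q-1) := mul_lt_mul_of_pos_right key2 hsp

lemma Fmono {q c1 c2 a b : ℝ} (hq : 1 < q) (hc1 : 0 < c1) (hc2 : 0 < c2)
    (ha : 0 < a) (hab : a < b) :
    c1*a^(q-1) - c2*a^(-q-1) < c1*b^(q-1) - c2*b^(-q-1) := by
  have h1 : a^(q-1) < b^(q-1) := Real.rpow_lt_rpow ha.le hab (by linarith)
  have h2 : b^(-q-1) < a^(-q-1) := Real.rpow_lt_rpow_of_neg ha hab (by linarith)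
  nlinarith

lemma hasDerivAt_F {q c1 c2 s : ℝ} (hs : 0 < s) :
    HasDerivAt (fun x : ℝ => c1*x^(q-1) - c2*x^(-q-1))
      (c1*(q-1)*s^(q-2) - c2*(-q-1)*s^(-q-2)) s := by
  have h1 : HasDerivAt (fun x : ℝ => x^(q-1)) ((q-1)*s^(q-1-1)) s :=
    Real.hasDerivAt_rpow_const (Or.inl (ne_of_gt hs))
  have h2 : HasDerivAt (fun x : ℝ => x^(-q-1)) ((-q-1)*s^(-q-1-1)) s :=
    Real.hasDerivAt_rpow_const (Or.inl (ne_of_gt hs))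
  have := (h1.const_mul c1).sub (h2.const_mul c2)
  refine this.congr_deriv ?_
  rw [show q-1-1 = q-2 by ring, show -q-1-1 = -q-2 by ring]
  ring

lemma F_lip {q c1 c2 m0 M0 : ℝ} (hq : 2 < q) (hc1 : 0 ≤ c1) (hc2 : 0 ≤ c2) (hm0 : 0 < m0)
    {u v : ℝ} (hvu : v ≤ u) (hmu : m0 ≤ u) (huM : u ≤ M0) (hmv : m0 ≤ v) (hvM : v ≤ M0) :
    |(c1*u^(q-1) - c2*u^(-q-1)) - (c1*v^(q-1) - c2*v^(-q-1))|
      ≤ (c1*(q-1)*M0^(q-2) + c2*(q+1)*m0^(-q-2)) * (u - v) := by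
  set L := c1*(q-1)*M0^(q-2) + c2*(q+1)*m0^(-q-2) with hL
  have hLnn : 0 ≤ L := by
    have e1 := Real.rpow_nonneg (by linarith : (0:ℝ) ≤ M0) (q-2)
    have e2 := Real.rpow_nonneg hm0.le (-q-2)
    have : 0 ≤ c1*(q-1)*M0^(q-2) := mul_nonneg (mul_nonneg hc1 (by linarith)) e1
    have : 0 ≤ c2*(q+1)*m0^(-q-2) := mul_nonneg (mul_nonneg hc2 (by linarith)) e2
    linarith
  rcases eq_or_lt_of_le hvu with h | h
  · subst h; simp only [sub_self, abs_zero, mul_zero]; exact le_rfl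
  · set f : ℝ → ℝ := fun x => c1*x^(q-1) - c2*x^(-q-1) with hf
    have hdiff : ∀ s ∈ Set.Icc v u, HasDerivAt f (c1*(q-1)*s^(q-2) - c2*(-q-1)*s^(-q-2)) s :=
      fun s hs => hasDerivAt_F (by rcases hs with ⟨h1, _⟩; linarith)
    obtain ⟨c, hc, hceq⟩ := exists_deriv_eq_slope f h
      (fun s hs => ((hdiff s hs).differentiableAt).continuousAt.continuousWithinAt)
      (fun s hs => ((hdiff s (Set.Ioo_subset_Icc_self hs)).differentiableAt).differentiableWithinAt)
    have hcIcc : c ∈ Set.Icc v u := Set.Ioo_subset_Icc_self hc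
    have hderc : deriv f c = c1*(q-1)*c^(q-2) - c2*(-q-1)*c^(-q-2) :=
      (hdiff c hcIcc).deriv
    have hbnd : |deriv f c| ≤ L := by
      rw [hderc]
      have hcpos : 0 < c := lt_of_lt_of_le hm0 (by rcases hcIcc with ⟨h1,_⟩; linarith)
      have e1 : c^(q-2) ≤ M0^(q-2) :=
        Real.rpow_le_rpow hcpos.le (by rcases hcIcc with ⟨_,h2⟩; linarith) (by linarith)
      have e2 : c^(-q-2) ≤ m0^(-q-2) :=
        Real.rpow_le_rpow_of_nonpos hm0 (by rcases hcIcc with ⟨h1,_⟩; linarith) (by linarith)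
      have p1 : 0 ≤ c1*(q-1)*c^(q-2) :=
        mul_nonneg (mul_nonneg hc1 (by linarith)) (Real.rpow_nonneg hcpos.le _)
      have p2 : 0 ≤ c2*(q+1)*c^(-q-2) :=
        mul_nonneg (mul_nonneg hc2 (by linarith)) (Real.rpow_nonneg hcpos.le _)
      rw [show c1*(q-1)*c^(q-2) - c2*(-q-1)*c^(-q-2)
            = c1*(q-1)*c^(q-2) + c2*(q+1)*c^(-q-2) by ring]
      rw [abs_of_nonneg (by linarith)]
      have e1' : c1*(q-1)*c^(q-2) ≤ c1*(q-1)*M0^(q-2) :=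
        mul_le_mul_of_nonneg_left e1 (by nlinarith)
      have e2' : c2*(q+1)*c^(-q-2) ≤ c2*(q+1)*m0^(-q-2) :=
        mul_le_mul_of_nonneg_left e2 (by nlinarith)
      linarith
    have heq2 : f u - f v = deriv f c * (u - v) := by
      rw [eq_div_iff (by intro hz; rw [sub_eq_zero] at hz; exact absurd hz (ne_of_gt h))] at hceq
      linarith
    calc |f u - f v| = |deriv f c| * (u - v) := by
          rw [heq2, abs_mul, abs_of_pos (by linarith : (0:ℝ) < u - v)]
      _ ≤ L * (u - v) := mul_le_mul_of_nonneg_right hbnd (by linarith)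

lemma F_at_psi {q t γ : ℝ} (hq0 : q ≠ 0) :
    (2+2*t^2)*(((1+γ^2)/(1+t^2)) ^ (1/(2*q)))^(q-1)
      - (2+2*γ^2)*(((1+γ^2)/(1+t^2)) ^ (1/(2*q)))^(-q-1) = 0 := by
  set R : ℝ := (1+γ^2)/(1+t^2) with hR'
  have hR : 0 < R := by positivity
  set Ψ : ℝ := R ^ (1/(2*q)) with hΨ'
  have hΨ : 0 < Ψ := Real.rpow_pos_of_pos hR _
  have h2q : Ψ ^ (2*q) = R := pow_rpow_self hR.le hq0
  rw [rpow_split (q := q) hΨ, h2q]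
  have hkey : (2+2*t^2) * R = 2+2*γ^2 := by
    rw [hR']
    field_simp
  linear_combination (Ψ^(-q-1)) * hkey

lemma eq_simplify {K Q d D A B lx t γ : ℝ} (hK : 0 < K) (hQ : 0 < Q) (hd : 0 < d)
    (h : -2 * K * Q * d ^ (-(Q - 2)) * D - 2 * (0:ℝ) ^ 2 * d ^ (-(2 * Q)) * A
      - K * (0 * d ^ (-Q) + γ + lx) ^ 2 * A + K * (t + lx) ^ 2 * B = 0) :
    D = d^(Q-2)/(2*Q) * ((t+lx)^2 * B - (γ+lx)^2 * A) := by
  have hme : d ^ (-(Q-2)) = (d ^ (Q-2))⁻¹ := Real.rpow_neg hd.le _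
  have hpos : 0 < d ^ (Q-2) := Real.rpow_pos_of_pos hd _
  rw [hme] at h
  norm_num at h
  field_simp [hpos.ne'] at h
  have h2 : K * ((-(2*Q*D)) - d^(Q-2)*(γ+lx)^2*A + (t+lx)^2*B*d^(Q-2)) = 0 := by
    linear_combination h
  have h3 := (mul_eq_zero.1 h2).resolve_left hK.ne'
  field_simp
  linear_combination -h3

lemma exists_max_periodic {ψ : ℝ → ℝ} (hc : Continuous ψ)
    (hper : ∀ x, ψ (x + 2*Real.pi) = ψ x) :
    ∃ x0 ∈ Set.Icc (0:ℝ) (2*Real.pi), ∀ y, ψ y ≤ ψ x0 := by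
  have hπ := Real.pi_pos
  obtain ⟨x0, hx0, hmax⟩ := (isCompact_Icc (a := (0:ℝ)) (b := 2*Real.pi)).exists_isMaxOn
    (Set.nonempty_Icc.2 (by linarith)) hc.continuousOn
  refine ⟨x0, hx0, fun y => ?_⟩
  have hper' : Function.Periodic ψ (2*Real.pi) := hper
  obtain ⟨z, hz, hy⟩ := hper'.exists_mem_Ico₀ (by linarith) y
  rw [hy]
  exact isMaxOn_iff.1 hmax z (Set.Ico_subset_Icc_self hz)

lemma exists_min_periodic {ψ : ℝ → ℝ} (hc : Continuous ψ)
    (hper : ∀ x, ψ (x + 2*Real.pi) = ψ x) :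
    ∃ x1 ∈ Set.Icc (0:ℝ) (2*Real.pi), ∀ y, ψ x1 ≤ ψ y := by
  have hπ := Real.pi_pos
  obtain ⟨x1, hx1, hmin⟩ := (isCompact_Icc (a := (0:ℝ)) (b := 2*Real.pi)).exists_isMinOn
    (Set.nonempty_Icc.2 (by linarith)) hc.continuousOn
  refine ⟨x1, hx1, fun y => ?_⟩
  have hper' : Function.Periodic ψ (2*Real.pi) := hper
  obtain ⟨z, hz, hy⟩ := hper'.exists_mem_Ico₀ (by linarith) y
  rw [hy]
  exact isMinOn_iff.1 hmin z (Set.Ico_subset_Icc_self hz)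

lemma upper_bound {q t γ c x0 : ℝ} {ψ : ℝ → ℝ} (hq0 : 0 < q)
    (ht1 : t + 1 ≠ 0) (ht2 : t - 1 ≠ 0) (hc : 0 < c)
    (hC1 : ContDiff ℝ 1 ψ) (hpos : ∀ x, 0 < ψ x)
    (hD : ∀ x : ℝ, (∀ k : ℤ, x ≠ (k:ℝ)*Real.pi) →
      deriv (deriv ψ) x = c * ((t+lam x)^2 * ψ x^(q-1) - (γ+lam x)^2 * ψ x^(-q-1)))
    (hmax : ∀ y, ψ y ≤ ψ x0) :
    ψ x0 ≤ max (((γ+1)^2/(t+1)^2) ^ (1/(2*q))) (((γ-1)^2/(t-1)^2) ^ (1/(2*q))) := by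
  set M0 : ℝ := max (((γ+1)^2/(t+1)^2) ^ (1/(2*q))) (((γ-1)^2/(t-1)^2) ^ (1/(2*q))) with hM0'
  by_contra hgt
  push_neg at hgt
  obtain ⟨r0, hr0, hfree⟩ := exists_pifree_interval x0
  obtain ⟨r1, hr1, hball⟩ := Metric.continuousAt_iff.1 hC1.continuous.continuousAt
    (ψ x0 - M0) (by linarith)
  set r : ℝ := min r0 (r1/2) with hr'
  apply not_max_aux ψ hC1 (show 0 < r from lt_min hr0 (by linarith)) hmax
  intro x hx
  obtain ⟨hx1, hx2⟩ := hx
  have hne := hfree x ⟨hx1, lt_of_lt_of_le hx2 (by simp [hr', min_le_left])⟩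
  have hψx : M0 < ψ x := by
    have hd : dist x x0 < r1 := by
      rw [Real.dist_eq, abs_of_pos (by linarith)]
      have : r ≤ r1/2 := min_le_right _ _
      linarith
    have := hball hd
    rw [Real.dist_eq] at this
    have := abs_lt.1 this
    linarith [this.1, this.2]
  rw [hD x hne]
  apply mul_pos hc
  rcases lam_cases x with hl | hl <;> rw [hl]
  · have := gpos (q := q) (a := t+1) (b := γ+1) hq0 ht1 (hpos x)
      (lt_of_le_of_lt (le_max_left _ _) hψx)
    linarith
  · have := gpos (q := q) (a := t-1) (b := γ-1) hq0 ht2 (hpos x)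
      (lt_of_le_of_lt (le_max_right _ _) hψx)
    have he1 : (t + -1) = t - 1 := by ring
    have he2 : (γ + -1) = γ - 1 := by ring
    rw [he1, he2]
    linarith

lemma lower_bound {q t γ c x1 : ℝ} {ψ : ℝ → ℝ} (hq0 : 0 < q)
    (ht1 : t + 1 ≠ 0) (ht2 : t - 1 ≠ 0) (hc : 0 < c)
    (hC1 : ContDiff ℝ 1 ψ) (hpos : ∀ x, 0 < ψ x)
    (hD : ∀ x : ℝ, (∀ k : ℤ, x ≠ (k:ℝ)*Real.pi) →
      deriv (deriv ψ) x = c * ((t+lam x)^2 * ψ x^(q-1) - (γ+lam x)^2 * ψ x^(-q-1)))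
    (hmin : ∀ y, ψ x1 ≤ ψ y) :
    min (((γ+1)^2/(t+1)^2) ^ (1/(2*q))) (((γ-1)^2/(t-1)^2) ^ (1/(2*q))) ≤ ψ x1 := by
  set m0 : ℝ := min (((γ+1)^2/(t+1)^2) ^ (1/(2*q))) (((γ-1)^2/(t-1)^2) ^ (1/(2*q))) with hm0'
  by_contra hgt
  push_neg at hgt
  obtain ⟨r0, hr0, hfree⟩ := exists_pifree_interval x1
  obtain ⟨r1, hr1, hball⟩ := Metric.continuousAt_iff.1 hC1.continuous.continuousAt
    (m0 - ψ x1) (by linarith)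
  set r : ℝ := min r0 (r1/2) with hr'
  apply not_min_aux ψ hC1 (show 0 < r from lt_min hr0 (by linarith)) hmin
  intro x hx
  obtain ⟨hx1', hx2⟩ := hx
  have hne := hfree x ⟨hx1', lt_of_lt_of_le hx2 (by simp [hr', min_le_left])⟩
  have hψx : ψ x < m0 := by
    have hd : dist x x1 < r1 := by
      rw [Real.dist_eq, abs_of_pos (by linarith)]
      have : r ≤ r1/2 := min_le_right _ _
      linarith
    have := hball hd
    rw [Real.dist_eq] at this
    have := abs_lt.1 this
    linarith [this.1, this.2]
  rw [hD x hne]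
  have : (t+lam x)^2 * ψ x^(q-1) - (γ+lam x)^2 * ψ x^(-q-1) < 0 := by
    rcases lam_cases x with hl | hl <;> rw [hl]
    · have := gneg (q := q) (a := t+1) (b := γ+1) hq0 ht1 (hpos x)
        (lt_of_lt_of_le hψx (min_le_left _ _))
      linarith
    · have := gneg (q := q) (a := t-1) (b := γ-1) hq0 ht2 (hpos x)
        (lt_of_lt_of_le hψx (min_le_right _ _))
      have he1 : (t + -1) = t - 1 := by ring
      have he2 : (γ + -1) = γ - 1 := by ring
      rw [he1, he2]
      linarith
  nlinarith [hc, this]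

lemma g_bound {q t γ l s m0 M0 : ℝ} (hq1 : 1 < q) (hl : l = 1 ∨ l = -1)
    (hm0 : 0 < m0) (hms : m0 ≤ s) (hsM : s ≤ M0) :
    |(t+l)^2 * s^(q-1) - (γ+l)^2 * s^(-q-1)|
      ≤ (|t|+1)^2 * M0^(q-1) + (|γ|+1)^2 * m0^(-q-1) := by
  have hs : 0 < s := lt_of_lt_of_le hm0 hms
  have habs : ∀ a : ℝ, (a+l)^2 ≤ (|a|+1)^2 := by
    intro a
    rcases hl with h | h <;> subst h <;> nlinarith [abs_nonneg a, le_abs_self a, neg_abs_le a]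
  have h1 : (t+l)^2 * s^(q-1) ≤ (|t|+1)^2 * M0^(q-1) :=
    mul_le_mul (habs t) (Real.rpow_le_rpow hs.le hsM (by linarith))
      (Real.rpow_nonneg hs.le _) (by positivity)
  have h2 : (γ+l)^2 * s^(-q-1) ≤ (|γ|+1)^2 * m0^(-q-1) :=
    mul_le_mul (habs γ) (Real.rpow_le_rpow_of_nonpos hm0 hms (by linarith))
      (Real.rpow_nonneg hs.le _) (by positivity)
  have p1 : 0 ≤ (t+l)^2 * s^(q-1) := mul_nonneg (sq_nonneg _) (Real.rpow_nonneg hs.le _)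
  have p2 : 0 ≤ (γ+l)^2 * s^(-q-1) := mul_nonneg (sq_nonneg _) (Real.rpow_nonneg hs.le _)
  rw [abs_sub_le_iff]
  constructor <;> linarith

set_option maxHeartbeats 800000 in
/-- Small-d limit for vanishing transverse-traceless data (Lemma 3.20). -/
theorem small_d_limit (n : ℕ) (hn : 3 ≤ n) (t γ : ℝ)
    (hγ : -1 < γ ∧ γ < 1) (ht : |t| ≠ 1) :
    ∀ ε : ℝ, 0 < ε → ∃ δ : ℝ, 0 < δ ∧
      ∀ d : ℝ, 0 < d → d < δ →
        ∀ ψ : ℝ → ℝ, IsModelSolution n t γ 0 0 d ψ →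
          ∀ x : ℝ, |ψ x - ((1 + γ ^ 2) / (1 + t ^ 2)) ^ (1 / (2 * qex n))| < ε := by
  obtain ⟨hγl, hγr⟩ := hγ
  intro ε hε
  have hπ := Real.pi_pos
  have hn3 : (3:ℝ) ≤ (n:ℝ) := by exact_mod_cast hn
  have hq2 : 2 < qex n := by
    unfold qex
    rw [lt_div_iff₀ (by linarith)]
    linarith
  have hk : 0 < kap n := by
    unfold kap
    apply div_pos <;> linarith
  set q : ℝ := qex n with hqdef
  have hq0 : 0 < q := by linarith
  have hq1 : 1 < q := by linarith
  set e : ℝ := q - 2 with hedef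
  have he : 0 < e := by rw [hedef]; linarith
  have ht1 : t + 1 ≠ 0 := by
    intro h; apply ht; rw [show t = -1 by linarith, abs_neg, abs_one]
  have ht2 : t - 1 ≠ 0 := by
    intro h; apply ht; rw [show t = 1 by linarith, abs_one]
  -- the a priori bounds
  set s1 : ℝ := ((γ+1)^2/(t+1)^2) ^ (1/(2*q)) with hs1def
  set s2 : ℝ := ((γ-1)^2/(t-1)^2) ^ (1/(2*q)) with hs2def
  have hgsq1 : 0 < (γ+1)^2 := by nlinarith
  have hgsq2 : 0 < (γ-1)^2 := by nlinarith
  have hsq1 : 0 < (t+1)^2 := (sq_nonneg _).lt_of_ne' (by simpa using pow_ne_zero 2 ht1)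
  have hsq2 : 0 < (t-1)^2 := (sq_nonneg _).lt_of_ne' (by simpa using pow_ne_zero 2 ht2)
  have hs1 : 0 < s1 := Real.rpow_pos_of_pos (by positivity) _
  have hs2 : 0 < s2 := Real.rpow_pos_of_pos (by positivity) _
  set m0 : ℝ := min s1 s2 with hm0def
  set M0 : ℝ := max s1 s2 with hM0def
  have hm0 : 0 < m0 := lt_min hs1 hs2
  have hM0 : 0 < M0 := lt_of_lt_of_le hm0 min_le_max
  have hm0M0 : m0 ≤ M0 := min_le_max
  -- the limit value
  set Ψ : ℝ := ((1 + γ ^ 2) / (1 + t ^ 2)) ^ (1 / (2 * q)) with hΨdef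
  have hΨ : 0 < Ψ := Real.rpow_pos_of_pos (by positivity) _
  set ε' : ℝ := min (ε/2) (Ψ/2) with hε'def
  have hε' : 0 < ε' := lt_min (by linarith) (by linarith)
  have hε'2 : ε' ≤ ε/2 := min_le_left _ _
  have hΨε' : 0 < Ψ - ε' := by
    have : ε' ≤ Ψ/2 := min_le_right _ _
    linarith
  -- the balance function F
  set F : ℝ → ℝ := fun s => (2+2*t^2)*s^(q-1) - (2+2*γ^2)*s^(-q-1) with hFdef
  have hFval : ∀ s, F s = (2+2*t^2)*s^(q-1) - (2+2*γ^2)*s^(-q-1) := fun s => rfl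
  have hc1 : (0:ℝ) < 2+2*t^2 := by positivity
  have hc2 : (0:ℝ) < 2+2*γ^2 := by positivity
  have hFmono : ∀ a b : ℝ, 0 < a → a < b → F a < F b := by
    intro a b ha hab
    rw [hFval, hFval]
    exact Fmono hq1 hc1 hc2 ha hab
  have hFΨ : F Ψ = 0 := by
    rw [hFval, hΨdef]
    exact F_at_psi hq0.ne'
  set ρ : ℝ := min (F (Ψ+ε')) (-(F (Ψ-ε'))) with hρdef
  have hρ : 0 < ρ := by
    apply lt_min
    · have := hFmono Ψ (Ψ+ε') hΨ (by linarith); linarith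
    · have := hFmono (Ψ-ε') Ψ hΨε' (by linarith); linarith
  -- constants
  set G0 : ℝ := (|t|+1)^2 * M0^(q-1) + (|γ|+1)^2 * m0^(-q-1) with hG0def
  have hG0 : 0 ≤ G0 := by
    have e1 := Real.rpow_nonneg hM0.le (q-1)
    have e2 := Real.rpow_nonneg hm0.le (-q-1)
    positivity
  set K2 : ℝ := G0/(2*q) with hK2def
  have hK2 : 0 ≤ K2 := div_nonneg hG0 (by linarith)
  set L : ℝ := (t-1)^2*(q-1)*M0^(q-2) + (γ-1)^2*(q+1)*m0^(-q-2) with hLdef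
  have hL : 0 ≤ L := by
    have e1 := Real.rpow_nonneg hM0.le (q-2)
    have e2 := Real.rpow_nonneg hm0.le (-q-2)
    have h1 : 0 ≤ (t-1)^2*(q-1)*M0^(q-2) :=
      mul_nonneg (mul_nonneg (sq_nonneg _) (by linarith)) e1
    have h2 : 0 ≤ (γ-1)^2*(q+1)*m0^(-q-2) :=
      mul_nonneg (mul_nonneg (sq_nonneg _) (by linarith)) e2
    linarith
  set Cosc : ℝ := K2 * (2*Real.pi) * (2*Real.pi) with hCoscdef
  have hCosc : 0 ≤ Cosc := mul_nonneg (mul_nonneg hK2 (by linarith)) (by linarith)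
  set Cstar : ℝ := L * Cosc with hCstardef
  have hCstar : 0 ≤ Cstar := mul_nonneg hL hCosc
  set θ : ℝ := min (ρ/(Cstar+1)) (ε/(2*(Cosc+1))) with hθdef
  have hθ : 0 < θ := lt_min (div_pos hρ (by linarith)) (div_pos hε (by positivity))
  clear_value q e s1 s2 m0 M0 Ψ ε' F ρ G0 K2 L Cosc Cstar θ
  refine ⟨min 1 (θ ^ (1/e)), lt_min one_pos (Real.rpow_pos_of_pos hθ _), ?_⟩
  intro d hd0 hdδ ψ hψ
  obtain ⟨hper, hpos, hC1, heqn⟩ := hψ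
  have hde : d ^ e < θ := by
    have h1 : d < θ ^ (1/e) := lt_of_lt_of_le hdδ (min_le_right _ _)
    have := Real.rpow_lt_rpow hd0.le h1 he
    rwa [← Real.rpow_mul hθ.le, one_div, inv_mul_cancel₀ (ne_of_gt he), Real.rpow_one] at this
  have hdepos : 0 < d ^ e := Real.rpow_pos_of_pos hd0 _
  have hcoefpos : 0 < d^e/(2*q) := div_pos hdepos (by linarith)
  -- simplified equation
  have hD : ∀ x : ℝ, (∀ k : ℤ, x ≠ (k : ℝ) * Real.pi) →
      DifferentiableAt ℝ (deriv ψ) x ∧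
      deriv (deriv ψ) x
        = d^e/(2*q) * ((t+lam x)^2 * ψ x^(q-1) - (γ+lam x)^2 * ψ x^(-q-1)) := by
    intro x hx
    obtain ⟨hdiff, heq⟩ := heqn x hx
    rw [← hqdef] at heq
    refine ⟨hdiff, ?_⟩
    rw [hedef]
    exact eq_simplify hk hq0 hd0 heq
  -- interior points of the half-period intervals are not multiples of π
  have hI1 : ∀ z ∈ Set.Ioo (0:ℝ) Real.pi, ∀ k : ℤ, z ≠ (k:ℝ)*Real.pi := by
    intro z hz
    exact ne_int_mul_pi (m := 0) (by push_cast; linarith [hz.1]) (by push_cast; linarith [hz.2])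
  have hI2 : ∀ z ∈ Set.Ioo Real.pi (2*Real.pi), ∀ k : ℤ, z ≠ (k:ℝ)*Real.pi := by
    intro z hz
    exact ne_int_mul_pi (m := 1) (by push_cast; linarith [hz.1]) (by push_cast; linarith [hz.2])
  -- extrema over a period
  obtain ⟨x0, hx0mem, hx0max⟩ := exists_max_periodic hC1.continuous hper
  obtain ⟨x1, hx1mem, hx1min⟩ := exists_min_periodic hC1.continuous hper
  -- a priori bounds
  have hub : ∀ y, ψ y ≤ M0 := by
    intro y
    have := upper_bound hq0 ht1 ht2 hcoefpos hC1 hpos (fun x hx => (hD x hx).2) hx0max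
    rw [hM0def, hs1def, hs2def]
    exact le_trans (hx0max y) this
  have hlb : ∀ y, m0 ≤ ψ y := by
    intro y
    have := lower_bound hq0 ht1 ht2 hcoefpos hC1 hpos (fun x hx => (hD x hx).2) hx1min
    rw [hm0def, hs1def, hs2def]
    exact le_trans this (hx1min y)
  -- second derivative bound
  have hD2 : ∀ x : ℝ, (∀ k : ℤ, x ≠ (k : ℝ) * Real.pi) →
      |deriv (deriv ψ) x| ≤ K2 * d^e := by
    intro x hx
    rw [(hD x hx).2, abs_mul, abs_of_pos hcoefpos]
    have hg := g_bound (t := t) (γ := γ) hq1 (lam_cases x) hm0 (hlb x) (hub x)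
    calc d^e/(2*q) * |(t+lam x)^2 * ψ x^(q-1) - (γ+lam x)^2 * ψ x^(-q-1)|
        ≤ d^e/(2*q) * G0 := mul_le_mul_of_nonneg_left (by rw [hG0def]; exact hg) hcoefpos.le
      _ = K2 * d^e := by rw [hK2def]; ring
  -- Lipschitz bound for deriv ψ on [0, 2π]
  have hlip : ∀ x y : ℝ, 0 ≤ x → x ≤ y → y ≤ 2*Real.pi →
      |deriv ψ y - deriv ψ x| ≤ (K2 * d^e) * (y - x) := by
    have hKnn : 0 ≤ K2 * d^e := mul_nonneg hK2 hdepos.le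
    have lipA := lip_piece (deriv ψ) (hC1.continuous_deriv le_rfl) hKnn
      (a := 0) (b := Real.pi)
      (fun z hz => ⟨(hD z (hI1 z hz)).1, hD2 z (hI1 z hz)⟩)
    have lipB := lip_piece (deriv ψ) (hC1.continuous_deriv le_rfl) hKnn
      (a := Real.pi) (b := 2*Real.pi)
      (fun z hz => ⟨(hD z (hI2 z hz)).1, hD2 z (hI2 z hz)⟩)
    intro x y hx hxy hy2
    rcases le_total y Real.pi with h | h
    · exact lipA x y hx hxy h
    · rcases le_total x Real.pi with h' | h'
      · have b1 := lipA x Real.pi hx h' le_rfl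
        have b2 := lipB Real.pi y le_rfl h hy2
        calc |deriv ψ y - deriv ψ x|
            ≤ |deriv ψ y - deriv ψ Real.pi| + |deriv ψ Real.pi - deriv ψ x| :=
              abs_sub_le _ _ _
          _ ≤ (K2 * d^e) * (y - x) := by linarith
      · exact lipB x y h' hxy hy2
  -- first derivative bound
  have hx0d : deriv ψ x0 = 0 :=
    IsLocalMax.deriv_eq_zero (Filter.Eventually.of_forall hx0max)
  have hd1 : ∀ x ∈ Set.Icc (0:ℝ) (2*Real.pi), |deriv ψ x| ≤ (K2 * d^e) * (2*Real.pi) := by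
    intro x hxm
    have hKnn : 0 ≤ K2 * d^e := mul_nonneg hK2 hdepos.le
    rcases le_total x x0 with h | h
    · have := hlip x x0 hxm.1 h hx0mem.2
      rw [hx0d, zero_sub, abs_neg] at this
      have h2 : x0 - x ≤ 2*Real.pi := by
        have := hxm.1; have := hx0mem.2; linarith
      calc |deriv ψ x| ≤ (K2*d^e)*(x0 - x) := this
        _ ≤ (K2*d^e)*(2*Real.pi) := mul_le_mul_of_nonneg_left h2 hKnn
    · have := hlip x0 x hx0mem.1 h hxm.2
      rw [hx0d, sub_zero] at this
      have h2 : x - x0 ≤ 2*Real.pi := by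
        have := hxm.2; have := hx0mem.1; linarith
      calc |deriv ψ x| ≤ (K2*d^e)*(x - x0) := this
        _ ≤ (K2*d^e)*(2*Real.pi) := mul_le_mul_of_nonneg_left h2 hKnn
  -- oscillation bound
  have hosc : ∀ x ∈ Set.Icc (0:ℝ) (2*Real.pi), ∀ y ∈ Set.Icc (0:ℝ) (2*Real.pi),
      |ψ x - ψ y| ≤ Cosc * d^e := by
    have hKnn : 0 ≤ (K2 * d^e) * (2*Real.pi) :=
      mul_nonneg (mul_nonneg hK2 hdepos.le) (by linarith)
    have lipψ := lip_piece ψ hC1.continuous hKnn (a := 0) (b := 2*Real.pi)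
      (fun z hz => ⟨(hC1.differentiable one_ne_zero).differentiableAt,
        hd1 z (Set.Ioo_subset_Icc_self hz)⟩)
    intro x hxm y hym
    have hcst : ((K2 * d^e) * (2*Real.pi)) * (2*Real.pi) = Cosc * d^e := by
      rw [hCoscdef]; ring
    rcases le_total x y with h | h
    · rw [abs_sub_comm]
      have := lipψ x y hxm.1 h hym.2
      have h2 : y - x ≤ 2*Real.pi := by have := hym.2; have := hxm.1; linarith
      calc |ψ y - ψ x| ≤ ((K2*d^e)*(2*Real.pi))*(y - x) := this
        _ ≤ ((K2*d^e)*(2*Real.pi))*(2*Real.pi) := mul_le_mul_of_nonneg_left h2 hKnn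
        _ = Cosc * d^e := hcst
    · have := lipψ y x hym.1 h hxm.2
      have h2 : x - y ≤ 2*Real.pi := by have := hxm.2; have := hym.1; linarith
      calc |ψ x - ψ y| ≤ ((K2*d^e)*(2*Real.pi))*(x - y) := this
        _ ≤ ((K2*d^e)*(2*Real.pi))*(2*Real.pi) := mul_le_mul_of_nonneg_left h2 hKnn
        _ = Cosc * d^e := hcst
  -- the two mean value points
  obtain ⟨ξ₁, hξ₁, hmv1⟩ := exists_deriv_eq_slope (deriv ψ) hπ
    (hC1.continuous_deriv le_rfl).continuousOn
    (fun z hz => ((hD z (hI1 z hz)).1).differentiableWithinAt)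
  obtain ⟨ξ₂, hξ₂, hmv2⟩ := exists_deriv_eq_slope (deriv ψ) (show Real.pi < 2*Real.pi by linarith)
    (hC1.continuous_deriv le_rfl).continuousOn
    (fun z hz => ((hD z (hI2 z hz)).1).differentiableWithinAt)
  have hper2 : deriv ψ (2*Real.pi) = deriv ψ 0 := by
    have h1 : (fun x => ψ (x + 2*Real.pi)) = ψ := funext hper
    have h2 := deriv_comp_add_const ψ (2*Real.pi) 0
    rw [h1, zero_add] at h2
    exact h2.symm
  have hsum : deriv (deriv ψ) ξ₁ + deriv (deriv ψ) ξ₂ = 0 := by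
    rw [hmv1, hmv2, hper2, sub_zero, show 2*Real.pi - Real.pi = Real.pi by ring]
    field_simp
    ring
  -- the key balance estimate
  have hl1 : lam ξ₁ = 1 := lam_pos hξ₁.1 hξ₁.2
  have hl2 : lam ξ₂ = -1 := lam_neg hξ₂.1 hξ₂.2
  have hbal : ((t+1)^2 * ψ ξ₁^(q-1) - (γ+1)^2 * ψ ξ₁^(-q-1))
      + ((t-1)^2 * ψ ξ₂^(q-1) - (γ-1)^2 * ψ ξ₂^(-q-1)) = 0 := by
    have he1 := (hD ξ₁ (hI1 ξ₁ hξ₁)).2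
    have he2 := (hD ξ₂ (hI2 ξ₂ hξ₂)).2
    rw [hl1] at he1
    rw [hl2] at he2
    have hcg : (d^e/(2*q)) * (((t+1)^2 * ψ ξ₁^(q-1) - (γ+1)^2 * ψ ξ₁^(-q-1))
        + ((t-1)^2 * ψ ξ₂^(q-1) - (γ-1)^2 * ψ ξ₂^(-q-1))) = 0 := by
      linear_combination hsum - he1 - he2
    exact (mul_eq_zero.1 hcg).resolve_left hcoefpos.ne'
  have hξ₁I : ξ₁ ∈ Set.Icc (0:ℝ) (2*Real.pi) := ⟨hξ₁.1.le, by linarith [hξ₁.2]⟩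
  have hξ₂I : ξ₂ ∈ Set.Icc (0:ℝ) (2*Real.pi) := ⟨by linarith [hξ₂.1], hξ₂.2.le⟩
  have hkey : |F (ψ ξ₁)| ≤ Cstar * d^e := by
    have hFu : F (ψ ξ₁) = ((t-1)^2 * ψ ξ₁^(q-1) - (γ-1)^2 * ψ ξ₁^(-q-1))
        - ((t-1)^2 * ψ ξ₂^(q-1) - (γ-1)^2 * ψ ξ₂^(-q-1)) := by
      rw [hFval]
      linear_combination hbal
    have hoscuv : |ψ ξ₁ - ψ ξ₂| ≤ Cosc * d^e := hosc ξ₁ hξ₁I ξ₂ hξ₂I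
    have hLb : |((t-1)^2 * ψ ξ₁^(q-1) - (γ-1)^2 * ψ ξ₁^(-q-1))
        - ((t-1)^2 * ψ ξ₂^(q-1) - (γ-1)^2 * ψ ξ₂^(-q-1))| ≤ L * |ψ ξ₁ - ψ ξ₂| := by
      rcases le_total (ψ ξ₂) (ψ ξ₁) with h | h
      · have := F_lip (M0 := M0) hq2 (sq_nonneg (t-1)) (sq_nonneg (γ-1)) hm0 h
          (hlb ξ₁) (hub ξ₁) (hlb ξ₂) (hub ξ₂)
        rw [hLdef, abs_of_nonneg (by linarith : (0:ℝ) ≤ ψ ξ₁ - ψ ξ₂)]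
        exact this
      · have := F_lip (M0 := M0) hq2 (sq_nonneg (t-1)) (sq_nonneg (γ-1)) hm0 h
          (hlb ξ₂) (hub ξ₂) (hlb ξ₁) (hub ξ₁)
        rw [abs_sub_comm, hLdef, abs_sub_comm (ψ ξ₁), abs_of_nonneg (by linarith : (0:ℝ) ≤ ψ ξ₂ - ψ ξ₁)]
        exact this
    calc |F (ψ ξ₁)| ≤ L * |ψ ξ₁ - ψ ξ₂| := by rw [hFu]; exact hLb
      _ ≤ L * (Cosc * d^e) := mul_le_mul_of_nonneg_left hoscuv hL
      _ = Cstar * d^e := by rw [hCstardef]; ring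
  -- ψ ξ₁ is close to Ψ
  have hstar : Cstar * d^e < ρ := by
    have h1 : θ ≤ ρ/(Cstar+1) := by rw [hθdef]; exact min_le_left _ _
    have h2 : Cstar * d^e ≤ Cstar * θ := mul_le_mul_of_nonneg_left hde.le hCstar
    have h3 : Cstar * θ ≤ Cstar * (ρ/(Cstar+1)) := mul_le_mul_of_nonneg_left h1 hCstar
    have h4 : Cstar/(Cstar+1) < 1 := (div_lt_one (by linarith)).2 (by linarith)
    have h6 : (Cstar/(Cstar+1))*ρ < 1*ρ := mul_lt_mul_of_pos_right h4 hρ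
    have h7 : Cstar * (ρ/(Cstar+1)) = (Cstar/(Cstar+1))*ρ := by ring
    rw [h7] at h3
    rw [one_mul] at h6
    linarith
  have habs : |F (ψ ξ₁)| < ρ := lt_of_le_of_lt hkey hstar
  have hup : ψ ξ₁ < Ψ + ε' := by
    by_contra hcon
    push_neg at hcon
    have hFle : F (Ψ+ε') ≤ F (ψ ξ₁) := by
      rcases eq_or_lt_of_le hcon with heq | hlt
      · rw [heq]
      · exact (hFmono _ _ (by linarith) hlt).le
    have hρle : ρ ≤ F (Ψ+ε') := by rw [hρdef]; exact min_le_left _ _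
    have := le_abs_self (F (ψ ξ₁))
    linarith
  have hdown : Ψ - ε' < ψ ξ₁ := by
    by_contra hcon
    push_neg at hcon
    have hFle : F (ψ ξ₁) ≤ F (Ψ-ε') := by
      rcases eq_or_lt_of_le hcon with heq | hlt
      · rw [heq]
      · exact (hFmono _ _ (hpos ξ₁) hlt).le
    have hρle : ρ ≤ -(F (Ψ-ε')) := by rw [hρdef]; exact min_le_right _ _
    have := neg_le_abs (F (ψ ξ₁))
    linarith
  have hclose : |ψ ξ₁ - Ψ| < ε' := abs_sub_lt_iff.2 ⟨by linarith, by linarith⟩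
  -- final conclusion
  intro x
  have hper' : Function.Periodic ψ (2*Real.pi) := hper
  obtain ⟨y, hy, hxy⟩ := hper'.exists_mem_Ico₀ (by linarith) x
  rw [hxy]
  have h1 : |ψ y - ψ ξ₁| ≤ Cosc * d^e := hosc y (Set.Ico_subset_Icc_self hy) ξ₁ hξ₁I
  have h2 : Cosc * d^e < ε/2 := by
    have ha : θ ≤ ε/(2*(Cosc+1)) := by rw [hθdef]; exact min_le_right _ _
    have hb : Cosc * d^e ≤ Cosc * θ := mul_le_mul_of_nonneg_left hde.le hCosc
    have hc : Cosc * θ ≤ Cosc * (ε/(2*(Cosc+1))) := mul_le_mul_of_nonneg_left ha hCosc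
    have hd4 : Cosc/(Cosc+1) < 1 := (div_lt_one (by linarith)).2 (by linarith)
    have h6 : (Cosc/(Cosc+1))*(ε/2) < 1*(ε/2) := mul_lt_mul_of_pos_right hd4 (by linarith)
    have h7 : Cosc * (ε/(2*(Cosc+1))) = (Cosc/(Cosc+1))*(ε/2) := by
      rw [mul_comm 2 (Cosc+1), ← div_div]
      ring
    rw [h7] at hc
    rw [one_mul] at h6
    linarith
  calc |ψ y - Ψ| ≤ |ψ y - ψ ξ₁| + |ψ ξ₁ - Ψ| := abs_sub_le _ _ _
    _ < ε := by linarith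
end

section
/- Lower barrier above the vanishing-TT solution (Proposition 3.29): Suppose |t| ≠ 1, μ = 0 and η ≠ 0. Then there exist c > 0 and D > 0 such that for all d ≥ D, if ψ is a solution of the model Lichnerowicz equation L_d with parameters (t, γ, η, μ = 0) and ψ̂ is a solution of L_d with parameters (t, γ, 0, 0), then ψ(x) ≥ ψ̂(x) + c d^{−2q} for all x ∈ ℝ. -/
open Real Filter

section Helpers
open Set
set_option maxHeartbeats 1000000

lemma exists_near_min (f : ℝ → ℝ) (hf : ContDiff ℝ 1 f)
    (hper : ∀ x, f (x + 2 * Real.pi) = f x)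
    (hdiff : ∀ x : ℝ, (∀ k : ℤ, x ≠ (k : ℝ) * Real.pi) → DifferentiableAt ℝ (deriv f) x) :
    ∃ x0 : ℝ, (∀ y, f x0 ≤ f y) ∧
      ∀ ε : ℝ, 0 < ε → ∃ ζ : ℝ, (∀ k : ℤ, ζ ≠ (k : ℝ) * Real.pi) ∧
        f ζ ≤ f x0 + ε ∧ 0 ≤ deriv (deriv f) ζ := by
  have hc : Continuous f := hf.continuous
  have hper' : Function.Periodic f (2 * Real.pi) := hper
  have h2π : 0 < 2 * Real.pi := by positivity
  obtain ⟨x0, -, hx0⟩ := (isCompact_Icc (a := (0:ℝ)) (b := 2 * Real.pi)).exists_isMinOn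
    ⟨0, by constructor <;> [rfl; positivity]⟩ hc.continuousOn
  have hmin : ∀ y, f x0 ≤ f y := by
    intro y
    obtain ⟨z, hz, hzy⟩ := hper'.exists_mem_Ico₀ h2π y
    rw [hzy]
    exact hx0 (Ico_subset_Icc_self hz)
  refine ⟨x0, hmin, ?_⟩
  intro ε hε
  set m : ℤ := ⌊x0 / Real.pi⌋ + 1 with hm
  have hπ : (0:ℝ) < Real.pi := Real.pi_pos
  have hx0m : x0 < (m : ℝ) * Real.pi := by
    rw [hm]; push_cast; rw [← div_lt_iff₀ hπ]; exact Int.lt_floor_add_one _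
  have hnomult : ∀ y : ℝ, x0 < y → y < (m : ℝ) * Real.pi → ∀ k : ℤ, y ≠ (k : ℝ) * Real.pi := by
    intro y hy1 hy2 k hk
    have hk1 : x0 / Real.pi < (k : ℝ) := by
      rw [div_lt_iff₀ hπ]; rw [hk] at hy1; exact hy1
    have hk2 : m ≤ k := by
      have h1 := Int.floor_le (x0 / Real.pi)
      have h2 : ((⌊x0 / Real.pi⌋ : ℤ) : ℝ) < (k : ℝ) := lt_of_le_of_lt h1 hk1
      have h3 : ⌊x0 / Real.pi⌋ < k := by exact_mod_cast h2
      omega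
    have h4 : (m : ℝ) * Real.pi ≤ (k : ℝ) * Real.pi := by
      apply mul_le_mul_of_nonneg_right _ hπ.le
      exact_mod_cast hk2
    rw [hk] at hy2; linarith
  obtain ⟨δ, hδ0, hδ⟩ := Metric.continuousAt_iff.mp (hc.continuousAt (x := x0)) ε hε
  set h : ℝ := min (δ / 2) (((m : ℝ) * Real.pi - x0) / 2) with hh
  have hh0 : 0 < h := lt_min (by linarith) (by linarith)
  have hhδ : h < δ := lt_of_le_of_lt (min_le_left _ _) (by linarith)
  have hhm : x0 + h < (m : ℝ) * Real.pi := by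
    have := min_le_right (δ / 2) (((m : ℝ) * Real.pi - x0) / 2)
    rw [← hh] at this; linarith
  have hdf : Differentiable ℝ f := hf.differentiable one_ne_zero
  obtain ⟨ξ, hξ, hξs⟩ := exists_deriv_eq_slope f (show x0 < x0 + h by linarith)
    hc.continuousOn hdf.differentiableOn
  have hξ0 : 0 ≤ deriv f ξ := by
    rw [hξs]
    apply div_nonneg _ (by linarith)
    have := hmin (x0 + h); linarith
  have hd0 : deriv f x0 = 0 := by
    have : IsLocalMin f x0 := Filter.Eventually.of_forall hmin
    exact this.deriv_eq_zero
  have hcd : Continuous (deriv f) := hf.continuous_deriv le_rfl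
  obtain ⟨ζ, hζ, hζs⟩ := exists_deriv_eq_slope (deriv f) hξ.1 hcd.continuousOn
    (fun y hy => (hdiff y (hnomult y hy.1 (by have := hξ.2; have := hy.2; linarith))).differentiableWithinAt)
  have hζmult : ∀ k : ℤ, ζ ≠ (k : ℝ) * Real.pi :=
    hnomult ζ hζ.1 (by have := hζ.2; have := hξ.2; linarith)
  refine ⟨ζ, hζmult, ?_, ?_⟩
  · have hdist : dist ζ x0 < δ := by
      rw [Real.dist_eq, abs_lt]
      constructor <;> [linarith [hζ.1]; skip]
      have := hζ.2; have := hξ.2; linarith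
    have := hδ hdist
    rw [Real.dist_eq, abs_lt] at this
    linarith [this.1]
  · rw [hζs, hd0]
    apply div_nonneg (by linarith) (by linarith [hζ.1, hξ.1])

lemma exists_near_max (f : ℝ → ℝ) (hf : ContDiff ℝ 1 f)
    (hper : ∀ x, f (x + 2 * Real.pi) = f x)
    (hdiff : ∀ x : ℝ, (∀ k : ℤ, x ≠ (k : ℝ) * Real.pi) → DifferentiableAt ℝ (deriv f) x) :
    ∃ x1 : ℝ, (∀ y, f y ≤ f x1) ∧
      ∀ ε : ℝ, 0 < ε → ∃ ζ : ℝ, (∀ k : ℤ, ζ ≠ (k : ℝ) * Real.pi) ∧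
        f x1 - ε ≤ f ζ ∧ deriv (deriv f) ζ ≤ 0 := by
  have hneg : (deriv fun y => -f y) = fun x => -deriv f x := funext fun x => deriv.neg
  obtain ⟨x0, h1, h2⟩ := exists_near_min (fun x => -f x) hf.neg
    (fun x => by simp [hper x])
    (fun x hx => by rw [hneg]; exact (hdiff x hx).neg)
  refine ⟨x0, fun y => by have := h1 y; simpa using this, ?_⟩
  intro ε hε
  obtain ⟨ζ, hζ1, hζ2, hζ3⟩ := h2 ε hε
  refine ⟨ζ, hζ1, by simp at hζ2; linarith, ?_⟩
  have : deriv (deriv fun y => -f y) ζ = -deriv (deriv f) ζ := by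
    rw [hneg]; exact deriv.neg
  rw [this] at hζ3; linarith

lemma qex_gt_two {n : ℕ} (hn : 3 ≤ n) : 2 < qex n := by
  have h3 : (3:ℝ) ≤ n := by exact_mod_cast hn
  rw [qex, lt_div_iff₀ (by linarith)]
  linarith

lemma kap_pos {n : ℕ} (hn : 3 ≤ n) : 0 < kap n := by
  have h3 : (3:ℝ) ≤ n := by exact_mod_cast hn
  rw [kap]
  exact div_pos (by linarith) (by linarith)

lemma lam_bounds (t x : ℝ) :
    min ((t-1)^2) ((t+1)^2) ≤ (t + lam x)^2 ∧ (t + lam x)^2 ≤ max ((t-1)^2) ((t+1)^2) := by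
  have h : lam x = 1 ∨ lam x = -1 := by unfold lam; split <;> simp
  have e : (t + (-1:ℝ))^2 = (t-1)^2 := by ring
  rcases h with h | h <;> rw [h]
  · exact ⟨min_le_right _ _, le_max_right _ _⟩
  · rw [e]; exact ⟨min_le_left _ _, le_max_left _ _⟩

lemma le_of_eps {a b : ℝ} (h : ∀ ε : ℝ, 0 < ε → a ≤ b + ε) : a ≤ b := by
  by_contra hc
  push_neg at hc
  have := h ((a - b) / 2) (by linarith)
  linarith

lemma sol_upper (n : ℕ) (hn : 3 ≤ n) (t γ η d : ℝ)
    (hγ1 : γ - 1 ≠ 0) (ht1 : t - 1 ≠ 0) (ht2 : t + 1 ≠ 0)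
    (hd : 1 ≤ d) (ψ : ℝ → ℝ) (hψ : IsModelSolution n t γ η 0 d ψ) (x : ℝ) :
    ψ x ≤ ((2 * η ^ 2 + kap n * max ((γ-1)^2) ((γ+1)^2)) / (kap n * min ((t-1)^2) ((t+1)^2)))
      ^ (1 / (2 * qex n)) := by
  obtain ⟨hper, hpos, hc1, heq⟩ := hψ
  have hp : 2 < qex n := qex_gt_two hn
  have hκ : 0 < kap n := kap_pos hn
  have hd0 : 0 < d := by linarith
  have hat : 0 < min ((t-1)^2) ((t+1)^2) :=
    lt_min (sq_pos_of_ne_zero ht1) (sq_pos_of_ne_zero ht2)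
  have hAγ : 0 < max ((γ-1)^2) ((γ+1)^2) :=
    lt_of_lt_of_le (sq_pos_of_ne_zero hγ1) (le_max_left _ _)
  obtain ⟨x1, hmax, hnear⟩ := exists_near_max ψ hc1 hper (fun y hy => (heq y hy).1)
  set at_ : ℝ := min ((t-1)^2) ((t+1)^2) with hat_def
  set Ag : ℝ := max ((γ-1)^2) ((γ+1)^2) with hAg_def
  set M : ℝ := ((2 * η ^ 2 + kap n * Ag) / (kap n * at_)) ^ (1 / (2 * qex n)) with hM
  have h2q : (0:ℝ) < 2 * qex n := by linarith
  have hbound : ∀ ζ : ℝ, (∀ k : ℤ, ζ ≠ (k:ℝ) * Real.pi) → deriv (deriv ψ) ζ ≤ 0 → ψ ζ ≤ M := by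
    intro ζ hζm hζ2
    have E := (heq ζ hζm).2
    have hv : 0 < ψ ζ := hpos ζ
    have hNv : 0 < ψ ζ ^ (-qex n - 1) := Real.rpow_pos_of_pos hv _
    have hPv : 0 < ψ ζ ^ (qex n - 1) := Real.rpow_pos_of_pos hv _
    have hX : 0 < d ^ (-(qex n - 2)) := Real.rpow_pos_of_pos hd0 _
    have hY0 : 0 < d ^ (-(2 * qex n)) := Real.rpow_pos_of_pos hd0 _
    have hY1 : d ^ (-(2 * qex n)) ≤ 1 := Real.rpow_le_one_of_one_le_of_nonpos hd (by linarith)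
    have hPN : ψ ζ ^ (qex n - 1) = ψ ζ ^ (-qex n - 1) * ψ ζ ^ (2 * qex n) := by
      rw [← Real.rpow_add hv]
      congr 1
      ring
    obtain ⟨hT1, hT2⟩ := lam_bounds t ζ
    obtain ⟨hG1, hG2⟩ := lam_bounds γ ζ
    rw [← hat_def] at hT1
    rw [← hAg_def] at hG2
    have hE' : kap n * (t + lam ζ)^2 * (ψ ζ ^ (-qex n - 1) * ψ ζ ^ (2 * qex n))
        = 2 * kap n * qex n * d ^ (-(qex n - 2)) * deriv (deriv ψ) ζ
          + 2 * η ^ 2 * d ^ (-(2 * qex n)) * ψ ζ ^ (-qex n - 1)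
          + kap n * (γ + lam ζ)^2 * ψ ζ ^ (-qex n - 1) := by
      rw [← hPN]
      linear_combination E
    have t1 : 2 * kap n * qex n * d ^ (-(qex n - 2)) * deriv (deriv ψ) ζ ≤ 0 :=
      mul_nonpos_of_nonneg_of_nonpos
        (mul_nonneg (mul_nonneg (by linarith) (by linarith)) hX.le) hζ2
    have t2 : 2 * η ^ 2 * d ^ (-(2 * qex n)) * ψ ζ ^ (-qex n - 1)
        ≤ 2 * η ^ 2 * ψ ζ ^ (-qex n - 1) := by
      nlinarith [mul_nonneg (mul_nonneg (sq_nonneg η) (sub_nonneg.mpr hY1)) hNv.le]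
    have t3 : kap n * (γ + lam ζ)^2 * ψ ζ ^ (-qex n - 1) ≤ kap n * Ag * ψ ζ ^ (-qex n - 1) := by
      nlinarith [mul_nonneg (sub_nonneg.mpr hG2) (mul_nonneg hκ.le hNv.le)]
    have t4 : kap n * at_ * (ψ ζ ^ (-qex n - 1) * ψ ζ ^ (2 * qex n))
        ≤ kap n * (t + lam ζ)^2 * (ψ ζ ^ (-qex n - 1) * ψ ζ ^ (2 * qex n)) := by
      have hprod : 0 < ψ ζ ^ (-qex n - 1) * ψ ζ ^ (2 * qex n) := by rw [← hPN]; exact hPv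
      nlinarith [mul_nonneg (sub_nonneg.mpr hT1) (mul_nonneg hκ.le hprod.le)]
    have h5 : (kap n * at_ * ψ ζ ^ (2 * qex n)) * ψ ζ ^ (-qex n - 1)
        ≤ (2 * η ^ 2 + kap n * Ag) * ψ ζ ^ (-qex n - 1) := by nlinarith [t1, t2, t3, t4, hE']
    have h6 : kap n * at_ * ψ ζ ^ (2 * qex n) ≤ 2 * η ^ 2 + kap n * Ag :=
      le_of_mul_le_mul_right h5 hNv
    have h7 : ψ ζ ^ (2 * qex n) ≤ (2 * η ^ 2 + kap n * Ag) / (kap n * at_) := by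
      rw [le_div_iff₀ (mul_pos hκ hat)]
      nlinarith [h6]
    calc ψ ζ = (ψ ζ ^ (2 * qex n)) ^ (1 / (2 * qex n)) := by
          rw [← Real.rpow_mul hv.le, mul_one_div, div_self (ne_of_gt h2q), Real.rpow_one]
      _ ≤ M := Real.rpow_le_rpow (Real.rpow_nonneg hv.le _) h7 (by positivity)
  have hx1 : ψ x1 ≤ M := by
    apply le_of_eps
    intro ε hε
    obtain ⟨ζ, hζm, hζ1, hζ2⟩ := hnear ε hε
    have := hbound ζ hζm hζ2
    linarith
  linarith [hmax x]

lemma sol_lower (n : ℕ) (hn : 3 ≤ n) (t γ η d : ℝ)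
    (hγ1 : γ - 1 ≠ 0) (hγ2 : γ + 1 ≠ 0) (ht1 : t - 1 ≠ 0) (ht2 : t + 1 ≠ 0)
    (hd : 0 < d) (ψ : ℝ → ℝ) (hψ : IsModelSolution n t γ η 0 d ψ) (x : ℝ) :
    (min ((γ-1)^2) ((γ+1)^2) / max ((t-1)^2) ((t+1)^2)) ^ (1 / (2 * qex n)) ≤ ψ x := by
  obtain ⟨hper, hpos, hc1, heq⟩ := hψ
  have hp : 2 < qex n := qex_gt_two hn
  have hκ : 0 < kap n := kap_pos hn
  have hag : 0 < min ((γ-1)^2) ((γ+1)^2) :=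
    lt_min (sq_pos_of_ne_zero hγ1) (sq_pos_of_ne_zero hγ2)
  have hAt : 0 < max ((t-1)^2) ((t+1)^2) :=
    lt_of_lt_of_le (sq_pos_of_ne_zero ht1) (le_max_left _ _)
  obtain ⟨x0, hmin, hnear⟩ := exists_near_min ψ hc1 hper (fun y hy => (heq y hy).1)
  set ag : ℝ := min ((γ-1)^2) ((γ+1)^2) with hag_def
  set At : ℝ := max ((t-1)^2) ((t+1)^2) with hAt_def
  set m : ℝ := (ag / At) ^ (1 / (2 * qex n)) with hm
  have h2q : (0:ℝ) < 2 * qex n := by linarith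
  have hbound : ∀ ζ : ℝ, (∀ k : ℤ, ζ ≠ (k:ℝ) * Real.pi) → 0 ≤ deriv (deriv ψ) ζ → m ≤ ψ ζ := by
    intro ζ hζm hζ2
    have E := (heq ζ hζm).2
    have hv : 0 < ψ ζ := hpos ζ
    have hNv : 0 < ψ ζ ^ (-qex n - 1) := Real.rpow_pos_of_pos hv _
    have hPv : 0 < ψ ζ ^ (qex n - 1) := Real.rpow_pos_of_pos hv _
    have hX : 0 < d ^ (-(qex n - 2)) := Real.rpow_pos_of_pos hd _
    have hY0 : 0 < d ^ (-(2 * qex n)) := Real.rpow_pos_of_pos hd _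
    have hPN : ψ ζ ^ (qex n - 1) = ψ ζ ^ (-qex n - 1) * ψ ζ ^ (2 * qex n) := by
      rw [← Real.rpow_add hv]
      congr 1
      ring
    obtain ⟨hT1, hT2⟩ := lam_bounds t ζ
    obtain ⟨hG1, hG2⟩ := lam_bounds γ ζ
    rw [← hAt_def] at hT2
    rw [← hag_def] at hG1
    have hE' : kap n * (t + lam ζ)^2 * (ψ ζ ^ (-qex n - 1) * ψ ζ ^ (2 * qex n))
        = 2 * kap n * qex n * d ^ (-(qex n - 2)) * deriv (deriv ψ) ζ
          + 2 * η ^ 2 * d ^ (-(2 * qex n)) * ψ ζ ^ (-qex n - 1)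
          + kap n * (γ + lam ζ)^2 * ψ ζ ^ (-qex n - 1) := by
      rw [← hPN]
      linear_combination E
    have t1 : 0 ≤ 2 * kap n * qex n * d ^ (-(qex n - 2)) * deriv (deriv ψ) ζ :=
      mul_nonneg (mul_nonneg (mul_nonneg (by linarith) (by linarith)) hX.le) hζ2
    have t2 : 0 ≤ 2 * η ^ 2 * d ^ (-(2 * qex n)) * ψ ζ ^ (-qex n - 1) := by
      have := sq_nonneg η
      nlinarith [mul_nonneg (mul_nonneg (sq_nonneg η) hY0.le) hNv.le]
    have t3 : kap n * ag * ψ ζ ^ (-qex n - 1) ≤ kap n * (γ + lam ζ)^2 * ψ ζ ^ (-qex n - 1) := by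
      nlinarith [mul_nonneg (sub_nonneg.mpr hG1) (mul_nonneg hκ.le hNv.le)]
    have t4 : kap n * (t + lam ζ)^2 * (ψ ζ ^ (-qex n - 1) * ψ ζ ^ (2 * qex n))
        ≤ kap n * At * (ψ ζ ^ (-qex n - 1) * ψ ζ ^ (2 * qex n)) := by
      have hprod : 0 < ψ ζ ^ (-qex n - 1) * ψ ζ ^ (2 * qex n) := by rw [← hPN]; exact hPv
      nlinarith [mul_nonneg (sub_nonneg.mpr hT2) (mul_nonneg hκ.le hprod.le)]
    have h5 : (kap n * ag) * ψ ζ ^ (-qex n - 1)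
        ≤ (kap n * At * ψ ζ ^ (2 * qex n)) * ψ ζ ^ (-qex n - 1) := by
      nlinarith [t1, t2, t3, t4, hE']
    have h6 : kap n * ag ≤ kap n * At * ψ ζ ^ (2 * qex n) :=
      le_of_mul_le_mul_right h5 hNv
    have h7 : ag / At ≤ ψ ζ ^ (2 * qex n) := by
      rw [div_le_iff₀ hAt]
      have := (mul_le_mul_iff_right₀ hκ).mp (by nlinarith [h6] : kap n * ag ≤ kap n * (At * ψ ζ ^ (2 * qex n)))
      nlinarith [this]
    calc m ≤ (ψ ζ ^ (2 * qex n)) ^ (1 / (2 * qex n)) :=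
          Real.rpow_le_rpow (div_nonneg hag.le hAt.le) h7 (by positivity)
      _ = ψ ζ := by
          rw [← Real.rpow_mul hv.le, mul_one_div, div_self (ne_of_gt h2q), Real.rpow_one]
  have hx0 : m ≤ ψ x0 := by
    have : ∀ ε : ℝ, 0 < ε → m ≤ ψ x0 + ε := by
      intro ε hε
      obtain ⟨ζ, hζm, hζ1, hζ2⟩ := hnear ε hε
      have := hbound ζ hζm hζ2
      linarith
    exact le_of_eps this
  linarith [hmin x]

lemma rpow_diff_le {u v MM p : ℝ} (hu : 0 < u) (huv : u < v) (hvM : v ≤ MM) (hp : 2 ≤ p) :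
    v ^ (p - 1) - u ^ (p - 1) ≤ (p - 1) * MM ^ (p - 2) * (v - u) := by
  obtain ⟨ξ, hξ, hξs⟩ := exists_deriv_eq_slope (fun x => x ^ (p - 1) : ℝ → ℝ) huv
    (fun x hx => (Real.continuousAt_rpow_const x (p - 1)
      (Or.inl (ne_of_gt (lt_of_lt_of_le hu hx.1)))).continuousWithinAt)
    (fun x hx => (Real.hasDerivAt_rpow_const (p := p - 1)
      (Or.inl (ne_of_gt (hu.trans hx.1)))).differentiableAt.differentiableWithinAt)
  have hξ0 : 0 < ξ := hu.trans hξ.1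
  have hξs' : deriv (fun x : ℝ => x ^ (p - 1)) ξ = (v ^ (p - 1) - u ^ (p - 1)) / (v - u) := hξs
  have hder : deriv (fun x : ℝ => x ^ (p - 1)) ξ = (p - 1) * ξ ^ (p - 1 - 1) :=
    Real.deriv_rpow_const _ _
  have hexp : p - 1 - 1 = p - 2 := by ring
  rw [hexp] at hder
  have heq : v ^ (p - 1) - u ^ (p - 1) = (p - 1) * ξ ^ (p - 2) * (v - u) := by
    rw [← hder, hξs', div_mul_cancel₀ _ (ne_of_gt (by linarith : (0:ℝ) < v - u))]
  rw [heq]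
  have hξM : ξ ^ (p - 2) ≤ MM ^ (p - 2) :=
    Real.rpow_le_rpow hξ0.le (le_trans hξ.2.le hvM) (by linarith)
  nlinarith [mul_nonneg (sub_nonneg.mpr hξM)
    (mul_nonneg (by linarith : (0:ℝ) ≤ p - 1) (by linarith : (0:ℝ) ≤ v - u))]

lemma rpow_neg_diff_le {u v mm p : ℝ} (hm : 0 < mm) (hmu : mm ≤ u) (huv : u < v) (hp : 0 < p) :
    u ^ (-p - 1) - v ^ (-p - 1) ≤ (p + 1) * mm ^ (-p - 2) * (v - u) := by
  have hu : 0 < u := hm.trans_le hmu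
  obtain ⟨ξ, hξ, hξs⟩ := exists_deriv_eq_slope (fun x => x ^ (-p - 1) : ℝ → ℝ) huv
    (fun x hx => (Real.continuousAt_rpow_const x (-p - 1)
      (Or.inl (ne_of_gt (lt_of_lt_of_le hu hx.1)))).continuousWithinAt)
    (fun x hx => (Real.hasDerivAt_rpow_const (p := -p - 1)
      (Or.inl (ne_of_gt (hu.trans hx.1)))).differentiableAt.differentiableWithinAt)
  have hξ0 : 0 < ξ := hu.trans hξ.1
  have hξs' : deriv (fun x : ℝ => x ^ (-p - 1)) ξ = (v ^ (-p - 1) - u ^ (-p - 1)) / (v - u) := hξs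
  have hder : deriv (fun x : ℝ => x ^ (-p - 1)) ξ = (-p - 1) * ξ ^ (-p - 1 - 1) :=
    Real.deriv_rpow_const _ _
  have hexp : -p - 1 - 1 = -p - 2 := by ring
  rw [hexp] at hder
  have heq : u ^ (-p - 1) - v ^ (-p - 1) = (p + 1) * ξ ^ (-p - 2) * (v - u) := by
    have h1 : (-p - 1) * ξ ^ (-p - 2) = (v ^ (-p - 1) - u ^ (-p - 1)) / (v - u) := by
      rw [← hder, hξs']
    have h2 : (-p - 1) * ξ ^ (-p - 2) * (v - u) = v ^ (-p - 1) - u ^ (-p - 1) := by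
      rw [h1, div_mul_cancel₀ _ (ne_of_gt (by linarith : (0:ℝ) < v - u))]
    nlinarith [h2]
  rw [heq]
  have hξM : ξ ^ (-p - 2) ≤ mm ^ (-p - 2) :=
    Real.rpow_le_rpow_of_nonpos hm (hmu.trans hξ.1.le) (by linarith)
  nlinarith [mul_nonneg (sub_nonneg.mpr hξM)
    (mul_nonneg (by linarith : (0:ℝ) ≤ p + 1) (by linarith : (0:ℝ) ≤ v - u))]

end Helpers

set_option maxHeartbeats 1000000 in
/-- Lower barrier above the vanishing-TT solution (Proposition 3.29). -/
theorem lower_barrier_above_vanishing_TT (n : ℕ) (hn : 3 ≤ n) (t γ η : ℝ)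
    (hγ : -1 < γ ∧ γ < 1) (ht : |t| ≠ 1) (hη : η ≠ 0) :
    ∃ c : ℝ, 0 < c ∧ ∃ D : ℝ, 0 < D ∧
      ∀ d : ℝ, D ≤ d →
        ∀ ψ ψhat : ℝ → ℝ,
          IsModelSolution n t γ η 0 d ψ → IsModelSolution n t γ 0 0 d ψhat →
          ∀ x : ℝ, ψhat x + c * d ^ (-(2 * qex n)) ≤ ψ x := by
  have hp : 2 < qex n := qex_gt_two hn
  have hκ : 0 < kap n := kap_pos hn
  have ht1 : t - 1 ≠ 0 := by
    intro h
    apply ht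
    have : t = 1 := by linarith
    rw [this]; norm_num
  have ht2 : t + 1 ≠ 0 := by
    intro h
    apply ht
    have : t = -1 := by linarith
    rw [this]; norm_num
  have hγ1 : γ - 1 ≠ 0 := ne_of_lt (by linarith [hγ.2])
  have hγ2 : γ + 1 ≠ 0 := ne_of_gt (by linarith [hγ.1])
  set at_ : ℝ := min ((t-1)^2) ((t+1)^2) with hat_def
  set At : ℝ := max ((t-1)^2) ((t+1)^2) with hAt_def
  set ag : ℝ := min ((γ-1)^2) ((γ+1)^2) with hag_def
  set Ag : ℝ := max ((γ-1)^2) ((γ+1)^2) with hAg_def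
  have hat : 0 < at_ := lt_min (sq_pos_of_ne_zero ht1) (sq_pos_of_ne_zero ht2)
  have hAt : 0 < At := lt_of_lt_of_le (sq_pos_of_ne_zero ht1) (le_max_left _ _)
  have hag : 0 < ag := lt_min (sq_pos_of_ne_zero hγ1) (sq_pos_of_ne_zero hγ2)
  have hAg : 0 < Ag := lt_of_lt_of_le (sq_pos_of_ne_zero hγ1) (le_max_left _ _)
  have hη2 : 0 < η ^ 2 := sq_pos_of_ne_zero hη
  set M : ℝ := ((2 * η ^ 2 + kap n * Ag) / (kap n * at_)) ^ (1 / (2 * qex n)) with hM_def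
  set m : ℝ := (ag / At) ^ (1 / (2 * qex n)) with hm_def
  have hM0 : 0 < M := Real.rpow_pos_of_pos
    (div_pos (by nlinarith [mul_pos hκ hAg]) (mul_pos hκ hat)) _
  have hm0 : 0 < m := Real.rpow_pos_of_pos (div_pos hag hAt) _
  set K : ℝ := kap n * At * (qex n - 1) * M ^ (qex n - 2)
    + kap n * Ag * (qex n + 1) * m ^ (-qex n - 2) with hK_def
  have hK : 0 < K := add_pos
    (mul_pos (mul_pos (mul_pos hκ hAt) (by linarith)) (Real.rpow_pos_of_pos hM0 _))
    (mul_pos (mul_pos (mul_pos hκ hAg) (by linarith)) (Real.rpow_pos_of_pos hm0 _))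
  clear_value at_ At ag Ag M m K
  refine ⟨2 * η ^ 2 * M ^ (-qex n - 1) / K, by
    have := Real.rpow_pos_of_pos hM0 (-qex n - 1)
    positivity, 1, one_pos, ?_⟩
  intro d hd ψ ψh hψ hψh
  have hd0 : 0 < d := by linarith
  -- uniform bounds
  have hψub : ∀ x, ψ x ≤ M := fun x => by
    rw [hM_def, hAg_def, hat_def]; exact sol_upper n hn t γ η d hγ1 ht1 ht2 hd ψ hψ x
  have hψhub : ∀ x, ψh x ≤ M := by
    intro x
    have h0 := sol_upper n hn t γ 0 d hγ1 ht1 ht2 hd ψh hψh x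
    rw [hM_def, hAg_def, hat_def]
    refine le_trans h0 (Real.rpow_le_rpow (by positivity) ?_ (by positivity))
    rw [← hAg_def, ← hat_def]
    exact (div_le_div_iff_of_pos_right (mul_pos hκ hat)).mpr (by nlinarith [sq_nonneg η])
  have hψlb : ∀ x, m ≤ ψ x := fun x => by
    rw [hm_def, hag_def, hAt_def]; exact sol_lower n hn t γ η d hγ1 hγ2 ht1 ht2 hd0 ψ hψ x
  have hψhlb : ∀ x, m ≤ ψh x := fun x => by
    rw [hm_def, hag_def, hAt_def]; exact sol_lower n hn t γ 0 d hγ1 hγ2 ht1 ht2 hd0 ψh hψh x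
  obtain ⟨hperψ, hposψ, hc1ψ, heqψ⟩ := hψ
  obtain ⟨hperψh, hposψh, hc1ψh, heqψh⟩ := hψh
  set w : ℝ → ℝ := fun x => ψ x - ψh x with hw_def
  have hdw : deriv w = fun x => deriv ψ x - deriv ψh x := funext fun x =>
    deriv_sub (hc1ψ.differentiable one_ne_zero x) (hc1ψh.differentiable one_ne_zero x)
  obtain ⟨x0, hminw, hnear⟩ := exists_near_min w (hc1ψ.sub hc1ψh)
    (fun x => by simp only [hw_def]; rw [hperψ x, hperψh x])
    (fun x hx => by rw [hdw]; exact ((heqψ x hx).1).sub ((heqψh x hx).1))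
  clear_value w
  have hY0 : 0 < d ^ (-(2 * qex n)) := Real.rpow_pos_of_pos hd0 _
  have hgoal : 2 * η ^ 2 * M ^ (-qex n - 1) / K * d ^ (-(2 * qex n)) ≤ w x0 := by
    apply le_of_eps
    intro ε hε
    obtain ⟨ζ, hζm, hζ1, hζ2⟩ := hnear ε hε
    have Eψ := (heqψ ζ hζm).2
    have Eψh := (heqψh ζ hζm).2
    have hu : 0 < ψh ζ := hposψh ζ
    have hv : 0 < ψ ζ := hposψ ζ
    have hvM := hψub ζ
    have huM := hψhub ζ
    have hum := hψhlb ζ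
    have hNv : 0 < ψ ζ ^ (-qex n - 1) := Real.rpow_pos_of_pos hv _
    have hX : 0 < d ^ (-(qex n - 2)) := Real.rpow_pos_of_pos hd0 _
    have hw2 : deriv (deriv w) ζ = deriv (deriv ψ) ζ - deriv (deriv ψh) ζ := by
      rw [hdw]
      exact deriv_sub (heqψ ζ hζm).1 (heqψh ζ hζm).1
    have hw2pos : 0 ≤ deriv (deriv ψ) ζ - deriv (deriv ψh) ζ := by rw [← hw2]; exact hζ2
    obtain ⟨hT1, hT2⟩ := lam_bounds t ζ
    obtain ⟨hG1, hG2⟩ := lam_bounds γ ζ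
    rw [← hAt_def] at hT2
    rw [← hAg_def] at hG2
    have hM1 : kap n * (t + lam ζ)^2 * (ψ ζ ^ (qex n - 1) - ψh ζ ^ (qex n - 1))
        + kap n * (γ + lam ζ)^2 * (ψh ζ ^ (-qex n - 1) - ψ ζ ^ (-qex n - 1))
        - 2 * η ^ 2 * d ^ (-(2 * qex n)) * ψ ζ ^ (-qex n - 1)
        = 2 * kap n * qex n * d ^ (-(qex n - 2))
          * (deriv (deriv ψ) ζ - deriv (deriv ψh) ζ) := by
      linear_combination Eψ - Eψh
    have hR : 0 ≤ 2 * kap n * qex n * d ^ (-(qex n - 2))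
        * (deriv (deriv ψ) ζ - deriv (deriv ψh) ζ) :=
      mul_nonneg (mul_nonneg (mul_nonneg (by linarith) (by linarith)) hX.le) hw2pos
    have hmaster : 2 * η ^ 2 * d ^ (-(2 * qex n)) * ψ ζ ^ (-qex n - 1)
        ≤ kap n * (t + lam ζ)^2 * (ψ ζ ^ (qex n - 1) - ψh ζ ^ (qex n - 1))
          + kap n * (γ + lam ζ)^2 * (ψh ζ ^ (-qex n - 1) - ψ ζ ^ (-qex n - 1)) := by
      linarith [hM1, hR]
    -- strict positivity of the difference
    have hs : 0 < ψ ζ - ψh ζ := by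
      by_contra hcon
      push_neg at hcon
      have hPvu : ψ ζ ^ (qex n - 1) ≤ ψh ζ ^ (qex n - 1) :=
        Real.rpow_le_rpow hv.le (by linarith) (by linarith)
      have hNuv : ψh ζ ^ (-qex n - 1) ≤ ψ ζ ^ (-qex n - 1) :=
        Real.rpow_le_rpow_of_nonpos hv (by linarith) (by linarith)
      have hLpos : 0 < 2 * η ^ 2 * d ^ (-(2 * qex n)) * ψ ζ ^ (-qex n - 1) :=
        mul_pos (mul_pos (by linarith) hY0) hNv
      have hTn : 0 ≤ kap n * (t + lam ζ)^2 := mul_nonneg hκ.le (sq_nonneg _)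
      have hGn : 0 ≤ kap n * (γ + lam ζ)^2 := mul_nonneg hκ.le (sq_nonneg _)
      have hT0 : kap n * (t + lam ζ)^2 * (ψ ζ ^ (qex n - 1) - ψh ζ ^ (qex n - 1)) ≤ 0 :=
        mul_nonpos_of_nonneg_of_nonpos hTn (by linarith)
      have hG0 : kap n * (γ + lam ζ)^2 * (ψh ζ ^ (-qex n - 1) - ψ ζ ^ (-qex n - 1)) ≤ 0 :=
        mul_nonpos_of_nonneg_of_nonpos hGn (by linarith)
      linarith [hmaster, hLpos, hT0, hG0]
    have hlt : ψh ζ < ψ ζ := by linarith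
    have Pdiff : ψ ζ ^ (qex n - 1) - ψh ζ ^ (qex n - 1)
        ≤ (qex n - 1) * M ^ (qex n - 2) * (ψ ζ - ψh ζ) :=
      rpow_diff_le hu hlt hvM (by linarith)
    have Ndiff : ψh ζ ^ (-qex n - 1) - ψ ζ ^ (-qex n - 1)
        ≤ (qex n + 1) * m ^ (-qex n - 2) * (ψ ζ - ψh ζ) := by
      have := rpow_neg_diff_le hm0 hum hlt (by linarith : (0:ℝ) < qex n)
      convert this using 3 <;> ring
    have hPnn : 0 ≤ ψ ζ ^ (qex n - 1) - ψh ζ ^ (qex n - 1) :=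
      sub_nonneg.mpr (Real.rpow_le_rpow hu.le hlt.le (by linarith))
    have hNnn : 0 ≤ ψh ζ ^ (-qex n - 1) - ψ ζ ^ (-qex n - 1) :=
      sub_nonneg.mpr (Real.rpow_le_rpow_of_nonpos hu hlt.le (by linarith))
    have b1 : kap n * (t + lam ζ)^2 * (ψ ζ ^ (qex n - 1) - ψh ζ ^ (qex n - 1))
        ≤ kap n * At * ((qex n - 1) * M ^ (qex n - 2) * (ψ ζ - ψh ζ)) :=
      mul_le_mul (mul_le_mul_of_nonneg_left hT2 hκ.le) Pdiff hPnn
        (mul_nonneg hκ.le hAt.le)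
    have b2 : kap n * (γ + lam ζ)^2 * (ψh ζ ^ (-qex n - 1) - ψ ζ ^ (-qex n - 1))
        ≤ kap n * Ag * ((qex n + 1) * m ^ (-qex n - 2) * (ψ ζ - ψh ζ)) :=
      mul_le_mul (mul_le_mul_of_nonneg_left hG2 hκ.le) Ndiff hNnn
        (mul_nonneg hκ.le hAg.le)
    have hMNv : M ^ (-qex n - 1) ≤ ψ ζ ^ (-qex n - 1) :=
      Real.rpow_le_rpow_of_nonpos hv hvM (by linarith)
    have hLb : 2 * η ^ 2 * M ^ (-qex n - 1) * d ^ (-(2 * qex n))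
        ≤ 2 * η ^ 2 * d ^ (-(2 * qex n)) * ψ ζ ^ (-qex n - 1) := by
      linarith [mul_nonneg (mul_nonneg (sq_nonneg η) hY0.le) (sub_nonneg.mpr hMNv)]
    have hchain : 2 * η ^ 2 * M ^ (-qex n - 1) * d ^ (-(2 * qex n)) ≤ K * (ψ ζ - ψh ζ) := by
      have : kap n * At * ((qex n - 1) * M ^ (qex n - 2) * (ψ ζ - ψh ζ))
          + kap n * Ag * ((qex n + 1) * m ^ (-qex n - 2) * (ψ ζ - ψh ζ))
          = K * (ψ ζ - ψh ζ) := by rw [hK_def]; ring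
      linarith [hLb, hmaster, b1, b2, this.le, this.ge]
    have hfin : 2 * η ^ 2 * M ^ (-qex n - 1) / K * d ^ (-(2 * qex n)) ≤ ψ ζ - ψh ζ := by
      rw [div_mul_eq_mul_div, div_le_iff₀ hK]
      linarith [hchain]
    have hwζ : w ζ = ψ ζ - ψh ζ := by rw [hw_def]
    rw [hwζ] at hζ1
    linarith [hζ1, hfin]
  intro x
  have h1 := hminw x
  have hwx : w x = ψ x - ψh x := by rw [hw_def]
  rw [hwx] at h1
  linarith [hgoal, h1]
end

section
/- Template solution on the half line (Proposition 4.2): Let u₀ > 0. There exists a function U : [0, ∞) → ℝ, positive and twice continuously differentiable, such that U(0) = u₀, −U''(x) = U(x)^{−q−1} − U(x)^{q−1} for all x ≥ 0, U satisfies the first order equation U'(x) = √(2/q) · (U(x)^{−q/2} − U(x)^{q/2}) for all x ≥ 0, and U converges to 1 rapidly at infinity with U' converging to 0 rapidly at infinity: for every real r, x^r · |U(x) − 1| → 0 and x^r · |U'(x)| → 0 as x → ∞. -/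
open Real Filter Set

lemma tendsto_aux {g : ℝ → ℝ} {B c : ℝ} (hc : 0 < c) (hB : 0 ≤ B)
    (h : ∀ x ∈ Ici (0:ℝ), |g x| ≤ B * Real.exp (-(c*x))) (r : ℝ) :
    Tendsto (fun x : ℝ => x ^ r * |g x|) atTop (nhds 0) := by
  have h0 : Tendsto (fun x : ℝ => B * (x ^ r * Real.exp (-c * x))) atTop (nhds (B * 0)) :=
    (tendsto_rpow_mul_exp_neg_mul_atTop_nhds_zero r c hc).const_mul B
  rw [mul_zero] at h0
  apply squeeze_zero' ?_ ?_ h0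
  · filter_upwards [eventually_ge_atTop (0:ℝ)] with x hx
    exact mul_nonneg (Real.rpow_nonneg hx r) (abs_nonneg _)
  · filter_upwards [eventually_ge_atTop (0:ℝ)] with x hx
    calc x ^ r * |g x| ≤ x ^ r * (B * Real.exp (-(c*x))) :=
          mul_le_mul_of_nonneg_left (h x hx) (Real.rpow_nonneg hx r)
      _ = B * (x ^ r * Real.exp (-c * x)) := by rw [neg_mul]; ring

section qfacts

variable {q : ℝ} (hq : 2 ≤ q)

-- the vector field
lemma vf_hasDerivAt (q : ℝ) {u : ℝ} (hu : 0 < u) (cc : ℝ) :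
    HasDerivAt (fun u : ℝ => cc * (u ^ (-(q/2)) - u ^ (q/2)))
      (cc * ((-(q/2)) * u ^ (-(q/2) - 1) - (q/2) * u ^ (q/2 - 1))) u := by
  have h1 : HasDerivAt (fun u : ℝ => u ^ (-(q/2))) ((-(q/2)) * u ^ (-(q/2) - 1)) u :=
    Real.hasDerivAt_rpow_const (Or.inl hu.ne')
  have h2 : HasDerivAt (fun u : ℝ => u ^ (q/2)) ((q/2) * u ^ (q/2 - 1)) u :=
    Real.hasDerivAt_rpow_const (Or.inl hu.ne')
  exact (h1.sub h2).const_mul cc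

lemma vf_algebra {q : ℝ} (hq : 0 < q) {c : ℝ} (hcc : c * c = 2 / q) {u : ℝ} (hu : 0 < u) :
    -((c * ((-(q/2)) * u ^ (-(q/2) - 1) - (q/2) * u ^ (q/2 - 1)))
        * (c * (u ^ (-(q/2)) - u ^ (q/2))))
      = u ^ (-q - 1) - u ^ (q - 1) := by
  have e1 : u ^ (-(q/2) - 1) * u ^ (-(q/2)) = u ^ (-q - 1) := by
    rw [← Real.rpow_add hu]; congr 1; ring
  have e2 : u ^ (-(q/2) - 1) * u ^ (q/2) = u ^ (-1 : ℝ) := by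
    rw [← Real.rpow_add hu]; congr 1; ring
  have e3 : u ^ (q/2 - 1) * u ^ (-(q/2)) = u ^ (-1 : ℝ) := by
    rw [← Real.rpow_add hu]; congr 1; ring
  have e4 : u ^ (q/2 - 1) * u ^ (q/2) = u ^ (q - 1) := by
    rw [← Real.rpow_add hu]; congr 1; ring
  have expand : (c * ((-(q/2)) * u ^ (-(q/2) - 1) - (q/2) * u ^ (q/2 - 1)))
      * (c * (u ^ (-(q/2)) - u ^ (q/2)))
      = (c * c) * (q/2) * (-(u ^ (-(q/2) - 1) * u ^ (-(q/2))) + u ^ (-(q/2) - 1) * u ^ (q/2)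
          - u ^ (q/2 - 1) * u ^ (-(q/2)) + u ^ (q/2 - 1) * u ^ (q/2)) := by ring
  rw [expand, hcc, e1, e2, e3, e4]
  have hqne : q ≠ 0 := ne_of_gt hq
  field_simp
  ring

end qfacts



lemma gen_ode (f f' : ℝ → ℝ) (a u₀ c K : ℝ)
    (ha : a < u₀) (hu1 : u₀ < 1) (hc : 0 < c) (hK : 0 < K)
    (hf' : ∀ u ∈ Ioo a 1, HasDerivAt f (f' u) u)
    (hf'cont : ContinuousOn f' (Ioo a 1))
    (hlow : ∀ u ∈ Ioo a 1, c * (1 - u) ≤ f u)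
    (hhigh : ∀ u ∈ Ioo a 1, f u ≤ K * (1 - u)) :
    ∃ U : ℝ → ℝ,
      (∀ x ∈ Ici (0:ℝ), U x ∈ Ico u₀ 1) ∧
      U 0 = u₀ ∧
      ContDiffOn ℝ 2 U (Ici 0) ∧
      (∀ x ∈ Ici (0:ℝ), derivWithin U (Ici 0) x = f (U x)) ∧
      (∀ x ∈ Ici (0:ℝ), derivWithin (derivWithin U (Ici 0)) (Ici 0) x = f' (U x) * f (U x)) ∧
      (∀ x ∈ Ici (0:ℝ), |U x - 1| ≤ |u₀ - 1| * Real.exp (-(c * x))) ∧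
      (∀ x ∈ Ici (0:ℝ), |derivWithin U (Ici 0) x| ≤ K * |u₀ - 1| * Real.exp (-(c * x))) := by
  classical
  have hu₀O : u₀ ∈ Ioo a 1 := ⟨ha, hu1⟩
  have hO : IsOpen (Ioo a (1:ℝ)) := isOpen_Ioo
  have hfpos : ∀ u ∈ Ioo a 1, 0 < f u := fun u hu =>
    lt_of_lt_of_le (mul_pos hc (by linarith [hu.2])) (hlow u hu)
  have hfcont : ContinuousOn f (Ioo a 1) := fun u hu =>
    (hf' u hu).continuousAt.continuousWithinAt
  have hinvcont : ContinuousOn (fun u => (f u)⁻¹) (Ioo a 1) :=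
    hfcont.inv₀ (fun u hu => (hfpos u hu).ne')
  set F : ℝ → ℝ := fun u => ∫ t in u₀..u, (f t)⁻¹ with hF
  have hFderiv : ∀ u ∈ Ioo a 1, HasDerivAt F (f u)⁻¹ u := by
    intro u hu
    apply intervalIntegral.integral_hasDerivAt_right
    · apply ContinuousOn.intervalIntegrable
      exact hinvcont.mono ((ordConnected_Ioo).uIcc_subset hu₀O hu)
    · exact (hinvcont.stronglyMeasurableAtFilter hO u hu)
    · exact hinvcont.continuousAt (hO.mem_nhds hu)
  have hFcont : ContinuousOn F (Ioo a 1) := fun u hu =>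
    (hFderiv u hu).continuousAt.continuousWithinAt
  have hFmono : StrictMonoOn F (Ioo a 1) := by
    apply strictMonoOn_of_deriv_pos (convex_Ioo a 1) hFcont
    intro u hu
    rw [interior_Ioo] at hu
    rw [(hFderiv u hu).deriv]
    exact inv_pos.2 (hfpos u hu)
  have hF0 : F u₀ = 0 := intervalIntegral.integral_same
  have hlog : ∀ u ∈ Ico u₀ (1:ℝ), (Real.log (1-u₀) - Real.log (1-u))/K ≤ F u := by
    intro u hu
    have hint : ∀ t ∈ Icc u₀ u, (K*(1-t))⁻¹ ≤ (f t)⁻¹ := by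
      intro t ht
      have htO : t ∈ Ioo a 1 := ⟨lt_of_lt_of_le ha ht.1, lt_of_le_of_lt ht.2 hu.2⟩
      have := hhigh t htO
      exact inv_anti₀ (hfpos t htO) this
    have hgcont : ContinuousOn (fun t => (K*(1-t))⁻¹) (uIcc u₀ u) := by
      apply ContinuousOn.inv₀
      · exact (continuous_const.mul (continuous_const.sub continuous_id)).continuousOn
      · intro t ht
        rw [uIcc_of_le hu.1] at ht
        have h1t : (0:ℝ) < 1 - t := by
          have := lt_of_le_of_lt ht.2 hu.2
          linarith
        positivity
    have hgint : IntervalIntegrable (fun t => (K*(1-t))⁻¹) MeasureTheory.volume u₀ u :=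
      hgcont.intervalIntegrable
    have hfint : IntervalIntegrable (fun t => (f t)⁻¹) MeasureTheory.volume u₀ u := by
      apply ContinuousOn.intervalIntegrable
      apply hinvcont.mono
      exact (ordConnected_Ioo).uIcc_subset hu₀O ⟨lt_of_lt_of_le ha hu.1, hu.2⟩
    have hmono := intervalIntegral.integral_mono_on hu.1 hgint hfint hint
    have heval : (∫ t in u₀..u, (K*(1-t))⁻¹) = (Real.log (1-u₀) - Real.log (1-u))/K := by
      have hder : ∀ t ∈ uIcc u₀ u, HasDerivAt (fun s => -(Real.log (1-s))/K) ((K*(1-t))⁻¹) t := by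
        intro t ht
        rw [uIcc_of_le hu.1] at ht
        have ht1 : (1:ℝ) - t ≠ 0 := by
          have : t < 1 := lt_of_le_of_lt ht.2 hu.2
          intro h; linarith [this]
        have h1 : HasDerivAt (fun s : ℝ => 1 - s) (-1) t := by
          simpa using (hasDerivAt_id t).const_sub 1
        have h2 := (h1.log ht1)
        have h3 := (h2.neg).div_const K
        refine h3.congr_deriv ?_
        have : t < 1 := lt_of_le_of_lt ht.2 hu.2
        field_simp
      rw [intervalIntegral.integral_eq_sub_of_hasDerivAt hder hgint]
      ring
    calc (Real.log (1-u₀) - Real.log (1-u))/K = ∫ t in u₀..u, (K*(1-t))⁻¹ := heval.symm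
      _ ≤ F u := hmono
  have hFbig : ∀ x : ℝ, 0 ≤ x → ∃ u ∈ Ioo a 1, u₀ ≤ u ∧ x < F u := by
    intro x hx
    set ε := (1 - u₀) * Real.exp (-(K*x) - 1) with hεdef
    have hεpos : 0 < ε := mul_pos (by linarith) (Real.exp_pos _)
    have hεlt : ε < 1 - u₀ := by
      have h1 : Real.exp (-(K*x) - 1) < 1 := by
        rw [Real.exp_lt_one_iff]
        nlinarith [mul_nonneg hK.le hx]
      nlinarith
    refine ⟨1 - ε, ⟨by linarith, by linarith⟩, by linarith, ?_⟩
    have hlg := hlog (1 - ε) ⟨by linarith, by linarith⟩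
    have heq : Real.log (1 - (1 - ε)) = Real.log (1 - u₀) + (-(K*x) - 1) := by
      have : (1:ℝ) - (1 - ε) = ε := by ring
      rw [this, hεdef, Real.log_mul (by linarith) (Real.exp_pos _).ne', Real.log_exp]
    have : x < (Real.log (1-u₀) - Real.log (1 - (1 - ε)))/K := by
      rw [heq]
      rw [lt_div_iff₀ hK]
      nlinarith
    linarith
  set a' := (a + u₀)/2 with ha'def
  have ha'O : a' ∈ Ioo a 1 := ⟨by simp [ha'def]; linarith, by simp [ha'def]; linarith⟩
  have ha'u₀ : a' < u₀ := by simp [ha'def]; linarith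
  set A := F a' with hAdef
  have hA : A < 0 := by
    rw [hAdef, ← hF0]
    exact hFmono ha'O hu₀O ha'u₀
  have hsurj : ∀ x, A < x → ∃ u, u ∈ Ioo a 1 ∧ F u = x := by
    intro x hx
    obtain ⟨b, hbO, hub, hxb⟩ := hFbig (max x 0) (le_max_right _ _)
    have hab : a' ≤ b := by linarith
    have hsub : Icc a' b ⊆ Ioo a 1 :=
      fun t ht => ⟨lt_of_lt_of_le ha'O.1 ht.1, lt_of_le_of_lt ht.2 hbO.2⟩
    have hcont : ContinuousOn F (Icc a' b) := hFcont.mono hsub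
    have hxmem : x ∈ Icc (F a') (F b) :=
      ⟨le_of_lt hx, le_of_lt (lt_of_le_of_lt (le_max_left x 0) hxb)⟩
    obtain ⟨u, hu, hFu⟩ := intermediate_value_Icc hab hcont hxmem
    exact ⟨u, hsub hu, hFu⟩
  set U : ℝ → ℝ := fun x => if h : ∃ u, u ∈ Ioo a 1 ∧ F u = x then h.choose else u₀ with hUdef
  have hUspec : ∀ x, A < x → U x ∈ Ioo a 1 ∧ F (U x) = x := by
    intro x hx
    have h := hsurj x hx
    rw [hUdef]
    simp only [dif_pos h]
    exact h.choose_spec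
  have hmemIci : ∀ x : ℝ, x ∈ Ici (0:ℝ) → A < x := fun x hx => lt_of_lt_of_le hA hx
  have hU0 : U 0 = u₀ := by
    have h := hUspec 0 (by linarith)
    exact hFmono.injOn h.1 hu₀O (h.2.trans hF0.symm)
  have hUmem : ∀ x ∈ Ici (0:ℝ), U x ∈ Ico u₀ 1 := by
    intro x hx
    have h := hUspec x (hmemIci x hx)
    refine ⟨?_, h.1.2⟩
    by_contra hlt
    push_neg at hlt
    have h2 : F (U x) < F u₀ := hFmono h.1 hu₀O hlt
    rw [h.2, hF0] at h2
    exact absurd h2 (not_lt.2 hx)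
  have hUcont : ∀ x, A < x → ContinuousAt U x := by
    intro x hx
    rw [Metric.continuousAt_iff]
    intro ε hε
    have hu := hUspec x hx
    set u := U x with hudef
    set ε' := min ε (min ((u - a)/2) ((1 - u)/2)) with hε'def
    have he1 : ε' ≤ ε := min_le_left _ _
    have he2 : ε' ≤ (u - a)/2 := le_trans (min_le_right _ _) (min_le_left _ _)
    have he3 : ε' ≤ (1 - u)/2 := le_trans (min_le_right _ _) (min_le_right _ _)
    have hε'pos : 0 < ε' :=
      lt_min hε (lt_min (by linarith [hu.1.1]) (by linarith [hu.1.2]))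
    have hm : u - ε' ∈ Ioo a 1 := ⟨by linarith [hu.1.1], by linarith [hu.1.2]⟩
    have hp : u + ε' ∈ Ioo a 1 := ⟨by linarith [hu.1.1], by linarith [hu.1.2]⟩
    have hflt : F (u - ε') < x := by
      rw [← hu.2]
      exact hFmono hm hu.1 (by linarith)
    have hfgt : x < F (u + ε') := by
      rw [← hu.2]
      exact hFmono hu.1 hp (by linarith)
    refine ⟨min (min (x - F (u - ε')) (F (u + ε') - x)) (x - A),
      lt_min (lt_min (by linarith) (by linarith)) (by linarith), ?_⟩
    intro y hy
    rw [Real.dist_eq] at hy ⊢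
    obtain ⟨hy1, hy2⟩ := abs_lt.1 hy
    have hd1 : y - x < min (x - F (u - ε')) (F (u + ε') - x) := lt_of_lt_of_le hy2 (min_le_left _ _)
    have hd2 : -(min (x - F (u - ε')) (F (u + ε') - x)) < y - x := by
      have := min_le_left (min (x - F (u - ε')) (F (u + ε') - x)) (x - A)
      linarith
    have hyA : A < y := by
      have := min_le_right (min (x - F (u - ε')) (F (u + ε') - x)) (x - A)
      linarith
    have hyl : F (u - ε') < y := by
      have := min_le_left (x - F (u - ε')) (F (u + ε') - x)
      linarith
    have hyr : y < F (u + ε') := by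
      have := min_le_right (x - F (u - ε')) (F (u + ε') - x)
      linarith
    have hyspec := hUspec y hyA
    have l1 : u - ε' < U y := by
      by_contra hh
      push_neg at hh
      have := hFmono.monotoneOn hyspec.1 hm hh
      rw [hyspec.2] at this
      linarith
    have l2 : U y < u + ε' := by
      by_contra hh
      push_neg at hh
      have := hFmono.monotoneOn hp hyspec.1 hh
      rw [hyspec.2] at this
      linarith
    have : |U y - u| < ε' := abs_lt.2 ⟨by linarith, by linarith⟩
    exact lt_of_lt_of_le this he1
  have hUderiv : ∀ x, A < x → HasDerivAt U (f (U x)) x := by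
    intro x hx
    have hu := hUspec x hx
    have hev : ∀ᶠ y in nhds x, F (U y) = y := by
      filter_upwards [IsOpen.mem_nhds isOpen_Ioi hx] with y hy
      exact (hUspec y hy).2
    have h := HasDerivAt.of_local_left_inverse (hUcont x hx) (hFderiv (U x) hu.1)
      (inv_ne_zero (hfpos _ hu.1).ne') hev
    rwa [inv_inv] at h
  have hUcontOn : ContinuousOn U (Ioi A) := fun x hx => (hUcont x hx).continuousWithinAt
  have hUdiff : DifferentiableOn ℝ U (Ioi A) := fun x hx =>
    (hUderiv x hx).differentiableAt.differentiableWithinAt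
  have hUmapsTo : MapsTo U (Ioi A) (Ioo a 1) := fun x hx => (hUspec x hx).1
  have hderivUeq : EqOn (deriv U) (fun y => f (U y)) (Ioi A) := fun x hx => (hUderiv x hx).deriv
  have hfC1 : ContDiffOn ℝ 1 f (Ioo a 1) := by
    rw [show ((1:WithTop ℕ∞)) = 0 + 1 by norm_num, contDiffOn_succ_iff_deriv_of_isOpen hO]
    refine ⟨fun u hu => (hf' u hu).differentiableAt.differentiableWithinAt, by simp, ?_⟩
    rw [contDiffOn_zero]
    exact hf'cont.congr (fun u hu => (hf' u hu).deriv)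
  have hUC1 : ContDiffOn ℝ 1 U (Ioi A) := by
    rw [show ((1:WithTop ℕ∞)) = 0 + 1 by norm_num, contDiffOn_succ_iff_deriv_of_isOpen isOpen_Ioi]
    refine ⟨hUdiff, by simp, ?_⟩
    rw [contDiffOn_zero]
    exact (hfcont.comp hUcontOn hUmapsTo).congr hderivUeq
  have hUC2 : ContDiffOn ℝ 2 U (Ioi A) := by
    rw [show ((2:WithTop ℕ∞)) = 1 + 1 by norm_num, contDiffOn_succ_iff_deriv_of_isOpen isOpen_Ioi]
    refine ⟨hUdiff, by simp, ?_⟩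
    exact (hfC1.comp hUC1 hUmapsTo).congr hderivUeq
  have hIciSub : Ici (0:ℝ) ⊆ Ioi A := fun x hx => hmemIci x hx
  have hD : ∀ x ∈ Ici (0:ℝ), derivWithin U (Ici 0) x = f (U x) := fun x hx =>
    ((hUderiv x (hmemIci x hx)).hasDerivWithinAt).derivWithin (uniqueDiffOn_Ici 0 x hx)
  have hDD : ∀ x ∈ Ici (0:ℝ),
      derivWithin (derivWithin U (Ici 0)) (Ici 0) x = f' (U x) * f (U x) := by
    intro x hx
    have e1 : derivWithin (derivWithin U (Ici 0)) (Ici 0) x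
        = derivWithin (fun y => f (U y)) (Ici 0) x :=
      derivWithin_congr (fun y hy => hD y hy) (hD x hx)
    rw [e1]
    have h2 : HasDerivAt (fun y => f (U y)) (f' (U x) * f (U x)) x :=
      (hf' (U x) (hUspec x (hmemIci x hx)).1).comp x (hUderiv x (hmemIci x hx))
    exact h2.hasDerivWithinAt.derivWithin (uniqueDiffOn_Ici 0 x hx)
  -- decay
  set ψ : ℝ → ℝ := fun y => (U y - 1) * Real.exp (c * y) with hψdef
  have hψderiv : ∀ x, A < x →
      HasDerivAt ψ ((f (U x) + c * (U x - 1)) * Real.exp (c * x)) x := by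
    intro x hx
    have h1 : HasDerivAt (fun y => U y - 1) (f (U x)) x := (hUderiv x hx).sub_const 1
    have h2 : HasDerivAt (fun y : ℝ => c * y) (c * 1) x := (hasDerivAt_id x).const_mul c
    have h3 : HasDerivAt (fun y : ℝ => Real.exp (c * y)) (Real.exp (c * x) * (c * 1)) x := h2.exp
    have h4 := h1.mul h3
    refine h4.congr_deriv ?_
    ring
  have hψmono : MonotoneOn ψ (Ici 0) := by
    apply monotoneOn_of_deriv_nonneg (convex_Ici 0)
    · exact fun x hx => (hψderiv x (hmemIci x hx)).continuousAt.continuousWithinAt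
    · intro x hx
      rw [interior_Ici] at hx
      exact (hψderiv x (hmemIci x (mem_Ici.2 (le_of_lt hx)))).differentiableAt.differentiableWithinAt
    · intro x hx
      rw [interior_Ici] at hx
      rw [(hψderiv x (hmemIci x (mem_Ici.2 (le_of_lt hx)))).deriv]
      have hm := (hUspec x (hmemIci x (mem_Ici.2 (le_of_lt hx)))).1
      have := hlow (U x) hm
      have h5 : 0 ≤ f (U x) + c * (U x - 1) := by nlinarith
      exact mul_nonneg h5 (Real.exp_pos _).le
  have hdecay1 : ∀ x ∈ Ici (0:ℝ), |U x - 1| ≤ |u₀ - 1| * Real.exp (-(c * x)) := by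
    intro x hx
    have h := hψmono self_mem_Ici hx hx
    have hψ0 : ψ 0 = u₀ - 1 := by
      rw [hψdef]
      simp [hU0]
    rw [hψ0] at h
    have hm := hUmem x hx
    have hUlt : U x < 1 := hm.2
    have hUge : u₀ ≤ U x := hm.1
    rw [abs_of_neg (by linarith : U x - 1 < 0), abs_of_neg (by linarith : u₀ - 1 < 0)]
    have hexp : (0:ℝ) < Real.exp (c * x) := Real.exp_pos _
    have key : (1 - U x) * Real.exp (c * x) ≤ 1 - u₀ := by
      have he : (1 - U x) * Real.exp (c * x) = -((U x - 1) * Real.exp (c * x)) := by ring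
      rw [he]
      have := h
      rw [hψdef] at this
      simp only at this
      linarith
    have he2 : Real.exp (c * x) * Real.exp (-(c * x)) = 1 := by
      rw [← Real.exp_add]
      simp
    calc -(U x - 1) = ((1 - U x) * Real.exp (c * x)) * Real.exp (-(c * x)) := by
          rw [mul_assoc, he2]; ring
      _ ≤ (1 - u₀) * Real.exp (-(c * x)) :=
          mul_le_mul_of_nonneg_right key (Real.exp_pos _).le
      _ = -(u₀ - 1) * Real.exp (-(c * x)) := by ring
  have hdecay2 : ∀ x ∈ Ici (0:ℝ),
      |derivWithin U (Ici 0) x| ≤ K * |u₀ - 1| * Real.exp (-(c * x)) := by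
    intro x hx
    rw [hD x hx]
    have hm := (hUspec x (hmemIci x hx)).1
    have h1 : 0 < f (U x) := hfpos _ hm
    rw [abs_of_pos h1]
    have hm2 := hUmem x hx
    calc f (U x) ≤ K * (1 - U x) := hhigh _ hm
      _ = K * |U x - 1| := by rw [abs_of_neg (by linarith [hm2.2] : U x - 1 < 0)]; ring
      _ ≤ K * (|u₀ - 1| * Real.exp (-(c * x))) :=
          mul_le_mul_of_nonneg_left (hdecay1 x hx) hK.le
      _ = K * |u₀ - 1| * Real.exp (-(c * x)) := by ring
  exact ⟨U, hUmem, hU0, hUC2.mono hIciSub, hD, hDD, hdecay1, hdecay2⟩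

/-- Template solution on the half line (Proposition 4.2). -/
theorem template_solution (n : ℕ) (hn : 3 ≤ n) (u₀ : ℝ) (hu₀ : 0 < u₀) :
    ∃ U : ℝ → ℝ,
      (∀ x ∈ Ici (0 : ℝ), 0 < U x) ∧
      ContDiffOn ℝ 2 U (Ici 0) ∧
      U 0 = u₀ ∧
      (∀ x ∈ Ici (0 : ℝ),
        -(derivWithin (derivWithin U (Ici 0)) (Ici 0) x)
          = U x ^ (-qex n - 1) - U x ^ (qex n - 1)) ∧
      (∀ x ∈ Ici (0 : ℝ),
        derivWithin U (Ici 0) x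
          = Real.sqrt (2 / qex n) * (U x ^ (-(qex n) / 2) - U x ^ (qex n / 2))) ∧
      (∀ r : ℝ, Tendsto (fun x : ℝ => x ^ r * |U x - 1|) atTop (nhds 0)) ∧
      (∀ r : ℝ, Tendsto (fun x : ℝ => x ^ r * |derivWithin U (Ici 0) x|) atTop (nhds 0)) := by
  have hn3 : (3:ℝ) ≤ (n:ℝ) := by exact_mod_cast hn
  have hd : (0:ℝ) < (n:ℝ) - 2 := by linarith
  have hq2 : 2 < qex n := by
    rw [qex, lt_div_iff₀ hd]; linarith
  set q := qex n with hqdef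
  have hqpos : 0 < q := by linarith
  have hq1 : 1 ≤ q / 2 := by linarith
  set c := Real.sqrt (2 / q) with hcdef
  have hcpos : 0 < c := Real.sqrt_pos.2 (by positivity)
  have hcc : c * c = 2 / q := Real.mul_self_sqrt (by positivity)
  simp only [neg_div]
  rcases lt_trichotomy u₀ 1 with hlt | heq | hgt
  · -- case u₀ < 1
    set f : ℝ → ℝ := fun u => c * (u ^ (-(q/2)) - u ^ (q/2)) with hfdef
    set f' : ℝ → ℝ := fun u => c * ((-(q/2)) * u ^ (-(q/2) - 1) - (q/2) * u ^ (q/2 - 1))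
      with hf'def
    set K : ℝ := c * q * (u₀/2) ^ (-(q/2)) with hKdef
    have hK : 0 < K := by
      have := Real.rpow_pos_of_pos (by linarith : (0:ℝ) < u₀/2) (-(q/2))
      positivity
    have hf'O : ∀ u ∈ Ioo (u₀/2) 1, HasDerivAt f (f' u) u := by
      intro u hu
      exact vf_hasDerivAt q (by linarith [hu.1]) c
    have hf'contO : ContinuousOn f' (Ioo (u₀/2) 1) := by
      intro u hu
      have hu0 : 0 < u := by linarith [hu.1]
      have h1 := Real.continuousAt_rpow_const u (-(q/2) - 1) (Or.inl hu0.ne')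
      have h2 := Real.continuousAt_rpow_const u ((q/2) - 1) (Or.inl hu0.ne')
      exact (continuousAt_const.mul ((continuousAt_const.mul h1).sub
        (continuousAt_const.mul h2))).continuousWithinAt
    have hlow : ∀ u ∈ Ioo (u₀/2) 1, c * (1 - u) ≤ f u := by
      intro u hu
      have hu0 : 0 < u := by linarith [hu.1]
      have h1 : u ^ (q/2) ≤ u := by
        have := Real.rpow_le_rpow_of_exponent_ge hu0 hu.2.le hq1
        rwa [Real.rpow_one] at this
      have h2 : 1 ≤ u ^ (-(q/2)) := by
        rw [Real.rpow_neg hu0.le]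
        have h3 : u ^ (q/2) ≤ 1 := Real.rpow_le_one hu0.le hu.2.le (by linarith)
        have h4 : 0 < u ^ (q/2) := Real.rpow_pos_of_pos hu0 _
        have h5 := mul_le_mul_of_nonneg_right h3 (inv_pos.2 h4).le
        rwa [mul_inv_cancel₀ h4.ne', one_mul] at h5
      exact mul_le_mul_of_nonneg_left (by linarith) hcpos.le
    have hhigh : ∀ u ∈ Ioo (u₀/2) 1, f u ≤ K * (1 - u) := by
      intro u hu
      have hu0 : 0 < u := by linarith [hu.1]
      have ha0 : (0:ℝ) < u₀/2 := by linarith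
      have e : u ^ (-(q/2)) * u ^ q = u ^ (q/2) := by
        rw [← Real.rpow_add hu0]; congr 1; ring
      have identity : f u = c * u ^ (-(q/2)) * (1 - u ^ q) := by
        have h6 : c * u ^ (-(q/2)) * (1 - u ^ q)
            = c * (u ^ (-(q/2)) - u ^ (-(q/2)) * u ^ q) := by ring
        rw [h6, e]
      have b1 : u ^ (-(q/2)) ≤ (u₀/2) ^ (-(q/2)) := by
        have hpow : (u₀/2) ^ (q/2) ≤ u ^ (q/2) :=
          Real.rpow_le_rpow ha0.le hu.1.le (by linarith)
        rw [Real.rpow_neg ha0.le, Real.rpow_neg hu0.le]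
        exact inv_anti₀ (Real.rpow_pos_of_pos ha0 _) hpow
      have b2 : 1 - u ^ q ≤ q * (1 - u) := by
        have hb := one_add_mul_self_le_rpow_one_add (by linarith : (-1:ℝ) ≤ u - 1)
          (by linarith : (1:ℝ) ≤ q)
        rw [show (1:ℝ) + (u - 1) = u by ring] at hb
        linarith
      have b3 : 0 ≤ 1 - u ^ q := by
        have := Real.rpow_le_one hu0.le hu.2.le (by linarith : (0:ℝ) ≤ q)
        linarith
      have hw : 0 < (u₀/2) ^ (-(q/2)) := Real.rpow_pos_of_pos ha0 _
      calc f u = c * u ^ (-(q/2)) * (1 - u ^ q) := identity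
        _ ≤ c * (u₀/2) ^ (-(q/2)) * (1 - u ^ q) :=
            mul_le_mul_of_nonneg_right (mul_le_mul_of_nonneg_left b1 hcpos.le) b3
        _ ≤ c * (u₀/2) ^ (-(q/2)) * (q * (1 - u)) :=
            mul_le_mul_of_nonneg_left b2 (by positivity)
        _ = K * (1 - u) := by rw [hKdef]; ring
    obtain ⟨U, hUmem, hU0, hUC2, hD, hDD, hdec1, hdec2⟩ :=
      gen_ode f f' (u₀/2) u₀ c K (by linarith) hlt hcpos hK hf'O hf'contO hlow hhigh
    refine ⟨U, ?_, hUC2, hU0, ?_, ?_, ?_, ?_⟩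
    · exact fun x hx => lt_of_lt_of_le hu₀ (hUmem x hx).1
    · intro x hx
      rw [hDD x hx]
      have hUpos : 0 < U x := lt_of_lt_of_le hu₀ (hUmem x hx).1
      have halg := vf_algebra hqpos hcc hUpos
      rw [hf'def, hfdef]
      linear_combination halg
    · intro x hx
      rw [hD x hx, hfdef]
    · intro r
      exact tendsto_aux hcpos (abs_nonneg _) hdec1 r
    · intro r
      exact tendsto_aux hcpos (by positivity) hdec2 r
  · -- case u₀ = 1
    have hdc : ∀ y ∈ Ici (0:ℝ), derivWithin (fun _ : ℝ => (1:ℝ)) (Ici 0) y = 0 :=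
      fun y hy => congrFun (derivWithin_const _ _) y
    refine ⟨fun _ => 1, fun x _ => one_pos, contDiffOn_const, heq ▸ rfl, ?_, ?_, ?_, ?_⟩
    · intro x hx
      have h1 : EqOn (derivWithin (fun _ : ℝ => (1:ℝ)) (Ici 0)) (fun _ => (0:ℝ)) (Ici 0) :=
        fun y hy => hdc y hy
      rw [derivWithin_congr h1 (h1 hx), congrFun (derivWithin_fun_const _ _) x]
      simp
    · intro x hx
      rw [hdc x hx]
      simp
    · intro r
      simp only [sub_self, abs_zero, mul_zero]
      exact tendsto_const_nhds
    · intro r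
      have hev : ∀ᶠ x : ℝ in atTop,
          (0:ℝ) = x ^ r * |derivWithin (fun _ : ℝ => (1:ℝ)) (Ici 0) x| := by
        filter_upwards [eventually_ge_atTop (0:ℝ)] with x hx
        rw [hdc x hx]
        simp
      exact Filter.Tendsto.congr' hev tendsto_const_nhds
  · -- case u₀ > 1
    set g : ℝ → ℝ := fun v => c * ((2 - v) ^ (q/2) - (2 - v) ^ (-(q/2))) with hgdef
    set g' : ℝ → ℝ := fun v =>
      c * ((q/2) * (2 - v) ^ (q/2 - 1) * (-1) - (-(q/2)) * (2 - v) ^ (-(q/2) - 1) * (-1))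
      with hg'def
    set M : ℝ := ((1 + u₀) ^ (q/2) - 1) / u₀ with hMdef
    have hMpos : 0 < M := by
      have h1 : 1 < (1 + u₀) ^ (q/2) :=
        (Real.one_lt_rpow_iff_of_pos (by linarith)).2 (Or.inl ⟨by linarith, by linarith⟩)
      rw [hMdef]
      exact div_pos (by linarith) (by linarith)
    set K : ℝ := 2 * c * M with hKdef
    have hK : 0 < K := by rw [hKdef]; positivity
    have hg'O : ∀ v ∈ Ioo (1 - u₀) 1, HasDerivAt g (g' v) v := by
      intro v hv
      have hw : (0:ℝ) < 2 - v := by linarith [hv.2]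
      have hs : HasDerivAt (fun y : ℝ => 2 - y) (-1) v := by
        simpa using (hasDerivAt_id v).const_sub 2
      have hA : HasDerivAt (fun y : ℝ => (2 - y) ^ (q/2))
          ((q/2) * (2 - v) ^ (q/2 - 1) * (-1)) v :=
        (Real.hasDerivAt_rpow_const (p := q/2) (Or.inl hw.ne')).comp v hs
      have hB : HasDerivAt (fun y : ℝ => (2 - y) ^ (-(q/2)))
          ((-(q/2)) * (2 - v) ^ (-(q/2) - 1) * (-1)) v :=
        (Real.hasDerivAt_rpow_const (p := -(q/2)) (Or.inl hw.ne')).comp v hs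
      exact (hA.sub hB).const_mul c
    have hg'contO : ContinuousOn g' (Ioo (1 - u₀) 1) := by
      intro v hv
      have hw : (0:ℝ) < 2 - v := by linarith [hv.2]
      have hsc : ContinuousAt (fun y : ℝ => 2 - y) v :=
        (continuous_const.sub continuous_id).continuousAt
      have h1 := (Real.continuousAt_rpow_const (2 - v) ((q/2) - 1) (Or.inl hw.ne')).comp hsc
      have h2 := (Real.continuousAt_rpow_const (2 - v) (-(q/2) - 1) (Or.inl hw.ne')).comp hsc
      exact (continuousAt_const.mul
        (((continuousAt_const.mul h1).mul continuousAt_const).sub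
          ((continuousAt_const.mul h2).mul continuousAt_const))).continuousWithinAt
    have hlowg : ∀ v ∈ Ioo (1 - u₀) 1, c * (1 - v) ≤ g v := by
      intro v hv
      have hw : (0:ℝ) < 2 - v := by linarith [hv.2]
      have hw1 : (1:ℝ) ≤ 2 - v := by linarith [hv.2]
      have hb := one_add_mul_self_le_rpow_one_add (by linarith [hv.2] : (-1:ℝ) ≤ 1 - v) hq1
      rw [show (1:ℝ) + (1 - v) = 2 - v by ring] at hb
      have hone : 1 ≤ (2 - v) ^ (q/2) := by
        have := Real.rpow_le_rpow_of_exponent_le hw1 (by linarith : (0:ℝ) ≤ q/2)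
        rwa [Real.rpow_zero] at this
      have hinv : (2 - v) ^ (-(q/2)) ≤ 1 := by
        rw [Real.rpow_neg hw.le]
        exact inv_le_one_of_one_le₀ hone
      have hmain : 1 - v ≤ (2 - v) ^ (q/2) - (2 - v) ^ (-(q/2)) := by
        nlinarith [mul_nonneg (by linarith : (0:ℝ) ≤ q/2 - 1) (by linarith [hv.2] : (0:ℝ) ≤ 1 - v)]
      exact mul_le_mul_of_nonneg_left hmain hcpos.le
    have hhighg : ∀ v ∈ Ioo (1 - u₀) 1, g v ≤ K * (1 - v) := by
      intro v hv
      have hw : (0:ℝ) < 2 - v := by linarith [hv.2]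
      set t : ℝ := (1 - v) / u₀ with htdef
      have ht0 : 0 ≤ t := by
        rw [htdef]
        exact div_nonneg (by linarith [hv.2]) (by linarith)
      have ht1 : t ≤ 1 := by
        rw [htdef, div_le_one (by linarith)]
        linarith [hv.1]
      have htu : t * u₀ = 1 - v := by
        rw [htdef]
        field_simp
      have hcx : (2 - v) ^ (q/2) ≤ 1 + t * ((1 + u₀) ^ (q/2) - 1) := by
        have hconv := (convexOn_rpow hq1).2 (le_refl (0:ℝ) |>.trans zero_le_one : (1:ℝ) ∈ Ici 0)
          (by simp; linarith : (1 + u₀ : ℝ) ∈ Ici 0)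
          (by linarith : (0:ℝ) ≤ 1 - t) ht0 (by ring)
        simp only [smul_eq_mul, Real.one_rpow] at hconv
        have harg : (1 - t) * 1 + t * (1 + u₀) = 2 - v := by
          have h7 : (1 - t) * 1 + t * (1 + u₀) = 1 + t * u₀ := by ring
          rw [h7, htu]; ring
        rw [harg] at hconv
        calc (2 - v) ^ (q/2) ≤ (1 - t) * 1 + t * ((1 + u₀) ^ (q/2)) := hconv
          _ = 1 + t * ((1 + u₀) ^ (q/2) - 1) := by ring
      have hAM : 2 ≤ (2 - v) ^ (q/2) + (2 - v) ^ (-(q/2)) := by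
        have hp : 0 < (2 - v) ^ (q/2) := Real.rpow_pos_of_pos hw _
        have hr : 0 < (2 - v) ^ (-(q/2)) := Real.rpow_pos_of_pos hw _
        have hmul : (2 - v) ^ (q/2) * (2 - v) ^ (-(q/2)) = 1 := by
          rw [← Real.rpow_add hw]
          simp
        nlinarith [sq_nonneg ((2 - v) ^ (q/2) - 1), hp, hr, hmul]
      have hstep : (2 - v) ^ (q/2) - (2 - v) ^ (-(q/2)) ≤ 2 * (t * ((1 + u₀) ^ (q/2) - 1)) := by
        linarith
      have hfin : c * ((2 - v) ^ (q/2) - (2 - v) ^ (-(q/2)))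
          ≤ c * (2 * (t * ((1 + u₀) ^ (q/2) - 1))) :=
        mul_le_mul_of_nonneg_left hstep hcpos.le
      calc g v ≤ c * (2 * (t * ((1 + u₀) ^ (q/2) - 1))) := hfin
        _ = K * (1 - v) := by
            rw [hKdef, hMdef, htdef]
            field_simp
    obtain ⟨V, hVmem, hV0, hVC2, hDV, hDDV, hdec1V, hdec2V⟩ :=
      gen_ode g g' (1 - u₀) (2 - u₀) c K (by linarith) (by linarith) hcpos hK
        hg'O hg'contO hlowg hhighg
    have hVdiffOn : DifferentiableOn ℝ V (Ici 0) :=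
      hVC2.differentiableOn (by norm_num)
    have hinner : ∀ y ∈ Ici (0:ℝ),
        derivWithin (fun z => 2 - V z) (Ici 0) y = -(derivWithin V (Ici 0) y) := by
      intro y hy
      exact ((hVdiffOn y hy).hasDerivWithinAt.const_sub 2).derivWithin (uniqueDiffOn_Ici 0 y hy)
    have hw0 : ∀ x ∈ Ici (0:ℝ), (0:ℝ) < 2 - V x := by
      intro x hx
      have := (hVmem x hx).2
      linarith
    refine ⟨fun x => 2 - V x, ?_, contDiffOn_const.sub hVC2, by simp [hV0], ?_, ?_, ?_, ?_⟩
    · intro x hx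
      exact hw0 x hx
    · -- second order equation
      intro x hx
      have e1 : derivWithin (derivWithin (fun z => 2 - V z) (Ici 0)) (Ici 0) x
          = derivWithin (fun y => -(derivWithin V (Ici 0) y)) (Ici 0) x :=
        derivWithin_congr (fun y hy => hinner y hy) (hinner x hx)
      have hC1' : ContDiffOn ℝ 1 (derivWithin V (Ici 0)) (Ici 0) :=
        hVC2.derivWithin (uniqueDiffOn_Ici 0) (by norm_num)
      have hdiff2 : DifferentiableWithinAt ℝ (derivWithin V (Ici 0)) (Ici 0) x :=
        (hC1'.differentiableOn one_ne_zero) x hx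
      have h4 := (hdiff2.hasDerivWithinAt.fun_neg).derivWithin (uniqueDiffOn_Ici 0 x hx)
      rw [e1, h4, hDDV x hx]
      have halg := vf_algebra hqpos hcc (hw0 x hx)
      rw [hg'def, hgdef]
      simp only [neg_neg]
      linear_combination halg
    · -- first order equation
      intro x hx
      rw [hinner x hx, hDV x hx, hgdef]
      ring
    · intro r
      apply tendsto_aux hcpos (abs_nonneg (u₀ - 1)) ?_ r
      intro x hx
      have h5 := hdec1V x hx
      rw [show (2:ℝ) - u₀ - 1 = -(u₀ - 1) by ring, abs_neg] at h5
      rw [show (2:ℝ) - V x - 1 = -(V x - 1) by ring, abs_neg]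
      exact h5
    · intro r
      apply tendsto_aux hcpos (by positivity : (0:ℝ) ≤ K * |u₀ - 1|) ?_ r
      intro x hx
      have h5 := hdec2V x hx
      rw [show (2:ℝ) - u₀ - 1 = -(u₀ - 1) by ring, abs_neg] at h5
      rw [hinner x hx, abs_neg]
      exact h5
end

section
/- Non-existence for a strengthened coupling constant (Section 3.4, second Proposition): Fix ε > 0 and suppose μ = 0. Then there exists δ > 0 such that whenever |t − γ| < δ, for every d > 0 every solution ψ of the perturbed model Lichnerowicz equation L_d^ε satisfies ψ(0) > 1; in particular there is no d > 0 admitting a solution with ψ(0) = 1. -/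
open Real Filter

/-- A solution of the perturbed model Lichnerowicz equation `L_d^ε`, arising from the
constraint equations with momentum constraint div K − (1+ε) d(tr K) = 0. -/
def IsPertModelSolution (n : ℕ) (t γ η μ ε d : ℝ) (ψ : ℝ → ℝ) : Prop :=
  (∀ x, ψ (x + 2 * Real.pi) = ψ x) ∧
  (∀ x, 0 < ψ x) ∧
  ContDiff ℝ 1 ψ ∧
  ∀ x : ℝ, (∀ k : ℤ, x ≠ (k : ℝ) * Real.pi) →
    DifferentiableAt ℝ (deriv ψ) x ∧
    -2 * kap n * qex n * d ^ (-(qex n - 2)) * deriv (deriv ψ) x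
      - 2 * η ^ 2 * d ^ (-(2 * qex n)) * ψ x ^ (-qex n - 1)
      - kap n * ((1 + ε) * (γ + lam x) + μ * d ^ (-qex n)) ^ 2 * ψ x ^ (-qex n - 1)
      + kap n * (t + lam x) ^ 2 * ψ x ^ (qex n - 1) = 0

set_option maxHeartbeats 1000000

/-- Non-existence for a strengthened coupling constant (Section 3.4, second Proposition). -/
theorem strengthened_coupling_nonexistence (n : ℕ) (hn : 3 ≤ n) (γ η ε : ℝ)
    (hγ : -1 < γ ∧ γ < 1) (hε : 0 < ε) :
    ∃ δ : ℝ, 0 < δ ∧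
      ∀ t : ℝ, |t - γ| < δ →
        ∀ d : ℝ, 0 < d →
          ∀ ψ : ℝ → ℝ, IsPertModelSolution n t γ η 0 ε d ψ → 1 < ψ 0 := by
  obtain ⟨hγ1, hγ2⟩ := hγ
  have h3 : (3:ℝ) ≤ n := by exact_mod_cast hn
  have hqpos : 0 < qex n := div_pos (by linarith) (by linarith)
  have hκpos : 0 < kap n := div_pos (by linarith) (by linarith)
  have hapos : 0 < min (γ + 1) (1 - γ) := lt_min (by linarith) (by linarith)
  set a := min (γ + 1) (1 - γ) with ha
  set r : ℝ := (1 + ε) / (1 + ε / 2) with hrdef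
  have hr0 : 0 < r := by positivity
  set θ : ℝ := r ^ (1 / (2 * qex n)) with hθdef
  have hθ1 : 1 < θ := by
    rw [hθdef, Real.one_lt_rpow_iff_of_pos hr0]
    exact Or.inl ⟨by rw [hrdef, lt_div_iff₀ (by linarith)]; linarith, by positivity⟩
  have hθpow : θ ^ (2 * qex n) = r := by
    rw [hθdef, ← Real.rpow_mul hr0.le, one_div_mul_cancel (by positivity), Real.rpow_one]
  refine ⟨ε * a / 2, div_pos (mul_pos hε hapos) two_pos, ?_⟩
  intro t ht d hd ψ hψ
  obtain ⟨hper, hpos, hC1, heq⟩ := hψ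
  by_contra hcon
  push_neg at hcon
  -- global minimum
  have hcψ : Continuous ψ := hC1.continuous
  obtain ⟨x₀, hx₀mem, hx₀min⟩ := (isCompact_Icc (a := (0:ℝ)) (b := 2*Real.pi)).exists_isMinOn
    ⟨0, by constructor <;> [rfl; positivity]⟩ hcψ.continuousOn
  have hmin : ∀ y, ψ x₀ ≤ ψ y := by
    intro y
    have hp : Function.Periodic ψ (2 * Real.pi) := hper
    obtain ⟨z, hz, hzy⟩ := hp.exists_mem_Ico₀ Real.two_pi_pos y
    rw [hzy]
    exact isMinOn_iff.mp hx₀min z ⟨hz.1, hz.2.le⟩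
  have hm1 : ψ x₀ ≤ 1 := (hmin 0).trans hcon
  -- derivative vanishes at the minimum
  have hdiff : Differentiable ℝ ψ := hC1.differentiable one_ne_zero
  have hloc : IsLocalMin ψ x₀ := Filter.Eventually.of_forall hmin
  have hd0 : deriv ψ x₀ = 0 := hloc.deriv_eq_zero
  -- key: wherever ψ < θ (off multiples of π), ψ'' < 0
  have key : ∀ x : ℝ, (∀ k : ℤ, x ≠ (k:ℝ) * Real.pi) → ψ x < θ → deriv (deriv ψ) x < 0 := by
    intro x hxk hxθ
    obtain ⟨_, heqx⟩ := heq x hxk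
    simp only [zero_mul, add_zero] at heqx
    set l := lam x with hl
    have hl1 : l = 1 ∨ l = -1 := by rw [hl]; unfold lam; split <;> simp
    have hu : 0 < ψ x := hpos x
    have habs : a ≤ |γ + l| := by
      rcases hl1 with h | h <;> rw [h]
      · rw [abs_of_pos (by linarith)]; exact (min_le_left _ _).trans (by linarith)
      · rw [abs_of_neg (by linarith)]; exact (min_le_right _ _).trans (by linarith)
    have hbpos : 0 < |γ + l| := lt_of_lt_of_le hapos habs
    have htl : |t + l| < |γ + l| * (1 + ε / 2) := by
      have e1 : t + l = (t - γ) + (γ + l) := by ring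
      have e2 : |t + l| ≤ |t - γ| + |γ + l| := by rw [e1]; exact abs_add_le _ _
      nlinarith [mul_le_mul_of_nonneg_left habs hε.le]
    have hsq : (t + l) ^ 2 < (|γ + l| * (1 + ε / 2)) ^ 2 := by
      nlinarith [abs_nonneg (t + l), sq_abs (t + l)]
    have hup : ψ x ^ (2 * qex n) < r := by
      calc ψ x ^ (2 * qex n) < θ ^ (2 * qex n) :=
            Real.rpow_lt_rpow hu.le hxθ (by positivity)
        _ = r := hθpow
    have hupos : 0 < ψ x ^ (2 * qex n) := Real.rpow_pos_of_pos hu _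
    have hprod : (t + l) ^ 2 * ψ x ^ (2 * qex n) < (|γ + l| * (1 + ε / 2)) ^ 2 * r :=
      mul_lt_mul'' hsq hup (sq_nonneg _) hupos.le
    have hstep : (|γ + l| * (1 + ε / 2)) ^ 2 * r ≤ ((1 + ε) * (γ + l)) ^ 2 := by
      have hb2 : |γ + l| ^ 2 = (γ + l) ^ 2 := sq_abs _
      have hre : (1 + ε / 2) * r = 1 + ε := by
        rw [hrdef]; field_simp
      calc (|γ + l| * (1 + ε / 2)) ^ 2 * r
          = (γ + l) ^ 2 * ((1 + ε / 2) * ((1 + ε / 2) * r)) := by rw [mul_pow, hb2]; ring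
        _ = (γ + l) ^ 2 * ((1 + ε / 2) * (1 + ε)) := by rw [hre]
        _ ≤ ((1 + ε) * (γ + l)) ^ 2 := by
            nlinarith [mul_nonneg (sq_nonneg (γ + l)) hε.le,
              mul_nonneg (sq_nonneg (γ + l)) (sq_nonneg ε)]
    have hmain : (t + l) ^ 2 * ψ x ^ (2 * qex n) < ((1 + ε) * (γ + l)) ^ 2 :=
      lt_of_lt_of_le hprod hstep
    have hA : 0 < ψ x ^ (-qex n - 1) := Real.rpow_pos_of_pos hu _
    have hBA : ψ x ^ (qex n - 1) = ψ x ^ (2 * qex n) * ψ x ^ (-qex n - 1) := by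
      rw [← Real.rpow_add hu]; congr 1; ring
    have h2 : kap n * (t + l) ^ 2 * ψ x ^ (qex n - 1)
        < kap n * ((1 + ε) * (γ + l)) ^ 2 * ψ x ^ (-qex n - 1) := by
      rw [hBA]
      calc kap n * (t + l) ^ 2 * (ψ x ^ (2 * qex n) * ψ x ^ (-qex n - 1))
          = kap n * ((t + l) ^ 2 * ψ x ^ (2 * qex n)) * ψ x ^ (-qex n - 1) := by ring
        _ < kap n * ((1 + ε) * (γ + l)) ^ 2 * ψ x ^ (-qex n - 1) :=
            mul_lt_mul_of_pos_right (mul_lt_mul_of_pos_left hmain hκpos) hA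
    have hη : 0 ≤ 2 * η ^ 2 * d ^ (-(2 * qex n)) * ψ x ^ (-qex n - 1) := by
      have := Real.rpow_pos_of_pos hd (-(2 * qex n))
      positivity
    have hP : 0 < d ^ (-(qex n - 2)) := Real.rpow_pos_of_pos hd _
    have hcoef : 0 < 2 * kap n * qex n * d ^ (-(qex n - 2)) := by positivity
    by_contra hD
    push_neg at hD
    nlinarith [mul_nonneg hcoef.le hD]
  -- next multiple of π after x₀
  set N : ℤ := ⌊x₀ / Real.pi⌋ + 1 with hN
  have hNπ : x₀ < (N : ℝ) * Real.pi := by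
    have h1 : x₀ / Real.pi < (N : ℝ) := by
      rw [hN]; push_cast; exact Int.lt_floor_add_one _
    exact (div_lt_iff₀ Real.pi_pos).mp h1
  -- neighborhood where ψ < θ
  have hev : ∀ᶠ y in nhds x₀, ψ y < θ := by
    have := hcψ.continuousAt (x := x₀)
    exact this.eventually_lt continuousAt_const (lt_of_le_of_lt hm1 hθ1)
  obtain ⟨ρ, hρ, hball⟩ := Metric.eventually_nhds_iff.mp hev
  set s : ℝ := min (ρ / 2) (((N : ℝ) * Real.pi - x₀) / 2) with hs
  have hspos : 0 < s := lt_min (by linarith) (by linarith)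
  have hsθ : ∀ y ∈ Set.Icc x₀ (x₀ + s), ψ y < θ := by
    intro y hy
    apply hball
    rw [Real.dist_eq, abs_of_nonneg (by linarith [hy.1])]
    have : s ≤ ρ / 2 := min_le_left _ _
    linarith [hy.2]
  have hsπ : ∀ y ∈ Set.Ioo x₀ (x₀ + s), ∀ k : ℤ, y ≠ (k : ℝ) * Real.pi := by
    rintro y hy k rfl
    have h1 : x₀ / Real.pi < (k : ℝ) := (div_lt_iff₀ Real.pi_pos).mpr hy.1
    have h2 : N ≤ k := by
      rw [hN]
      have : ⌊x₀ / Real.pi⌋ < k := Int.floor_lt.mpr h1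
      omega
    have h3 : (N : ℝ) * Real.pi ≤ (k : ℝ) * Real.pi := by
      apply mul_le_mul_of_nonneg_right _ Real.pi_pos.le
      exact_mod_cast h2
    have h4 : s ≤ ((N : ℝ) * Real.pi - x₀) / 2 := min_le_right _ _
    linarith [hy.2]
  -- deriv ψ strictly decreasing on [x₀, x₀+s]
  have hderiv2 : ∀ y ∈ Set.Ioo x₀ (x₀ + s), deriv (deriv ψ) y < 0 := fun y hy =>
    key y (hsπ y hy) (hsθ y ⟨hy.1.le, hy.2.le⟩)
  have hcd : Continuous (deriv ψ) := hC1.continuous_deriv le_rfl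
  have hanti : StrictAntiOn (deriv ψ) (Set.Icc x₀ (x₀ + s)) := by
    apply strictAntiOn_of_deriv_neg (convex_Icc _ _) hcd.continuousOn
    intro y hy
    rw [interior_Icc] at hy
    exact hderiv2 y hy
  have hdneg : ∀ y ∈ Set.Ioo x₀ (x₀ + s), deriv ψ y < 0 := by
    intro y hy
    have := hanti ⟨le_rfl, by linarith⟩ ⟨hy.1.le, hy.2.le⟩ hy.1
    rwa [hd0] at this
  have hψanti : StrictAntiOn ψ (Set.Icc x₀ (x₀ + s)) := by
    apply strictAntiOn_of_deriv_neg (convex_Icc _ _) hcψ.continuousOn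
    intro y hy
    rw [interior_Icc] at hy
    exact hdneg y hy
  have hcontra : ψ (x₀ + s) < ψ x₀ :=
    hψanti ⟨le_rfl, by linarith⟩ ⟨by linarith, le_rfl⟩ (by linarith)
  linarith [hmin (x₀ + s)]
end
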